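/- arXiv:2601.20020 — 7 statements merged into one kernel-verified Lean document; each statement's English description precedes it below -/
import Mathlib

section
/- Consider the standard edgelighter walk on n vertices with the initial walker position uniform on V, and for a fixed pair {u,v} of distinct vertices and t ≥ 1 let 𝔭_{t,u,v} = P({u,v} ≠ {L_s, L_{s+1}} for all 0 ≤ s ≤ t−1), i.e., the probability that the pair {u,v} has not been traversed by the walker by time t. Then (1 − 1/binom(n,2))^t ≤ 𝔭_{t,u,v} ≤ (1 − 1/(binom(n,2) + n))^{⌊(t+1)/2⌋}. -/
open scoped BigOperators
open scoped Classical
open Finset Matrix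

/-- The walker path determined by the start `l0` and `t` subsequent choices. -/
def walkSeq {n : ℕ} (t : ℕ) (l0 : Fin n) (f : Fin t → Fin n) : ℕ → Fin n :=
  fun i => if h : 0 < i ∧ i ≤ t then f ⟨i - 1, by omega⟩ else l0

/-- Probability, for the walk started at `l0` (each step uniform on the vertices),
that some unordered pair of distinct vertices has not been traversed within the
first `t` steps. -/
noncomputable def coverSurvival (n t : ℕ) (l0 : Fin n) : ℝ :=
  ((Finset.univ.filter fun f : Fin t → Fin n =>
      ∃ u v : Fin n, u ≠ v ∧ ∀ ℓ < t,
        s(walkSeq t l0 f ℓ, walkSeq t l0 f (ℓ + 1)) ≠ s(u, v)).card : ℝ) / (n : ℝ) ^ t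

/-- Expected cover time `E_{l0}[τ⁽ᵘ⁾_cover]`, via `E[τ] = ∑_{t ≥ 0} P(τ > t)`. -/
noncomputable def expCoverTime (n : ℕ) (l0 : Fin n) : ℝ := ∑' t : ℕ, coverSurvival n t l0

/-- `t⁽ᵘ⁾_cover`: maximum over starting states of the expected cover time. -/
noncomputable def maxExpCoverTime (n : ℕ) : ℝ := ⨆ l0 : Fin n, expCoverTime n l0
/-- Probability that the pair `{u,v}` has not been traversed by the walker within the
first `t` steps, for the walk whose initial position is uniform on the vertices. -/
noncomputable def travProb (n t : ℕ) (u v : Fin n) : ℝ :=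
  ((Finset.univ.filter fun g : Fin n × (Fin t → Fin n) =>
      ∀ ℓ < t, s(walkSeq t g.1 g.2 ℓ, walkSeq t g.1 g.2 (ℓ + 1)) ≠ s(u, v)).card : ℝ)
    / (n : ℝ) ^ (t + 1)

section EL
variable {n : ℕ} (u v : Fin n)

def elValid (t : ℕ) (g : Fin n × (Fin t → Fin n)) : Prop :=
  ∀ ℓ < t, s(walkSeq t g.1 g.2 ℓ, walkSeq t g.1 g.2 (ℓ + 1)) ≠ s(u, v)

noncomputable def elCnt (t : ℕ) (p : Fin n → Prop) : ℕ :=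
  (Finset.univ.filter fun g : Fin n × (Fin t → Fin n) =>
    elValid u v t g ∧ p (walkSeq t g.1 g.2 t)).card

lemma walkSeq_snoc_le {t : ℕ} (l : Fin n) (f : Fin t → Fin n) (w : Fin n) {i : ℕ}
    (hi : i ≤ t) : walkSeq (t+1) l (Fin.snoc f w) i = walkSeq t l f i := by
  unfold walkSeq
  rcases Nat.eq_zero_or_pos i with h0 | h0
  · subst h0; simp
  · rw [dif_pos ⟨h0, by omega⟩, dif_pos ⟨h0, hi⟩]
    have h2 : (⟨i - 1, by omega⟩ : Fin (t+1)) = Fin.castSucc ⟨i - 1, by omega⟩ := rfl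
    rw [h2, Fin.snoc_castSucc]

lemma walkSeq_snoc_last {t : ℕ} (l : Fin n) (f : Fin t → Fin n) (w : Fin n) :
    walkSeq (t+1) l (Fin.snoc f w) (t+1) = w := by
  unfold walkSeq
  rw [dif_pos ⟨by omega, le_refl _⟩]
  have h2 : (⟨t + 1 - 1, by omega⟩ : Fin (t+1)) = Fin.last t := rfl
  rw [h2, Fin.snoc_last]

lemma elValid_snoc {t : ℕ} (l : Fin n) (f : Fin t → Fin n) (w : Fin n) :
    elValid u v (t+1) (l, Fin.snoc f w) ↔
      elValid u v t (l, f) ∧ s(walkSeq t l f t, w) ≠ s(u, v) := by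
  constructor
  · intro h
    refine ⟨fun ℓ hℓ => ?_, ?_⟩
    · have h1 := h ℓ (by omega)
      simpa only [walkSeq_snoc_le l f w (le_of_lt hℓ), walkSeq_snoc_le l f w hℓ] using h1
    · have h1 := h t (by omega)
      simpa only [walkSeq_snoc_le l f w (le_refl t), walkSeq_snoc_last l f w] using h1
  · rintro ⟨h1, h2⟩ ℓ hℓ
    rcases Nat.lt_or_ge ℓ t with h3 | h3
    · have := h1 ℓ h3
      simpa only [walkSeq_snoc_le l f w (le_of_lt h3), walkSeq_snoc_le l f w h3] using this
    · have h4 : ℓ = t := by omega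
      subst h4
      simpa only [walkSeq_snoc_le l f w (le_refl ℓ), walkSeq_snoc_last l f w] using h2

end EL

section EL2
variable {n : ℕ} (u v : Fin n)

/-- splitting off the last step -/
def elEquiv (n t : ℕ) : ((Fin n × (Fin t → Fin n)) × Fin n) ≃ (Fin n × (Fin (t+1) → Fin n)) where
  toFun p := (p.1.1, Fin.snoc p.1.2 p.2)
  invFun q := ((q.1, Fin.init q.2), q.2 (Fin.last t))
  left_inv p := by
    ext i
    · rfl
    · simp [Fin.init_snoc]
    · simp [Fin.snoc_last]
  right_inv q := by
    ext i
    · rfl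
    · simp [Fin.snoc_init_self]

lemma elCnt_succ (t : ℕ) (p : Fin n → Prop) :
    elCnt u v (t+1) p = ∑ g : Fin n × (Fin t → Fin n),
      if elValid u v t g then
        (Finset.univ.filter fun w : Fin n =>
          s(walkSeq t g.1 g.2 t, w) ≠ s(u, v) ∧ p w).card
      else 0 := by
  rw [elCnt, Finset.card_filter]
  rw [← Fintype.sum_equiv (elEquiv n t)
    (fun q => if elValid u v (t+1) (elEquiv n t q) ∧
        p (walkSeq (t+1) (elEquiv n t q).1 (elEquiv n t q).2 (t+1)) then 1 else 0)
    (fun g => if elValid u v (t+1) g ∧ p (walkSeq (t+1) g.1 g.2 (t+1)) then 1 else 0)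
    (fun q => rfl)]
  rw [Fintype.sum_prod_type]
  refine Fintype.sum_congr _ _ fun g => ?_
  have hg : ∀ w : Fin n, elEquiv n t (g, w) = (g.1, Fin.snoc g.2 w) := fun w => rfl
  simp only [hg]
  by_cases hv : elValid u v t g
  · rw [if_pos hv, Finset.card_filter]
    refine Finset.sum_congr rfl fun w _ => ?_
    rw [walkSeq_snoc_last]
    congr 1
    rw [eq_iff_iff]
    constructor
    · rintro ⟨h1, h2⟩
      exact ⟨((elValid_snoc u v g.1 g.2 w).1 h1).2, h2⟩
    · rintro ⟨h1, h2⟩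
      exact ⟨(elValid_snoc u v g.1 g.2 w).2 ⟨hv, h1⟩, h2⟩
  · rw [if_neg hv]
    refine Finset.sum_eq_zero fun w _ => ?_
    rw [if_neg]
    rintro ⟨h1, -⟩
    exact hv ((elValid_snoc u v g.1 g.2 w).1 h1).1

end EL2

section EL3
variable {n : ℕ} {u v : Fin n}

lemma cardEq (huv : u ≠ v) (e : Fin n) :
    (Finset.univ.filter fun w : Fin n => s(e, w) = s(u, v)).card
      = (if e = u then 1 else 0) + (if e = v then 1 else 0) := by
  by_cases h1 : e = u
  · subst h1
    rw [if_pos rfl, if_neg huv]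
    have h : (Finset.univ.filter fun w : Fin n => s(e, w) = s(e, v)) = {v} := by
      ext w
      simp only [Finset.mem_filter, Finset.mem_univ, true_and, Finset.mem_singleton,
        Sym2.eq_iff]
      constructor
      · rintro (h | ⟨h, h'⟩)
        · exact h
        · exact absurd h huv
      · intro h; exact Or.inl h
    rw [h, Finset.card_singleton]
  · by_cases h2 : e = v
    · subst h2
      rw [if_neg h1, if_pos rfl]
      have h : (Finset.univ.filter fun w : Fin n => s(e, w) = s(u, e)) = {u} := by
        ext w
        simp only [Finset.mem_filter, Finset.mem_univ, true_and, Finset.mem_singleton,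
          Sym2.eq_iff]
        constructor
        · rintro (⟨h, -⟩ | h)
          · exact absurd h h1
          · exact h
        · intro h; exact Or.inr h
      rw [h, Finset.card_singleton]
    · rw [if_neg h1, if_neg h2]
      have h : (Finset.univ.filter fun w : Fin n => s(e, w) = s(u, v)) = ∅ := by
        ext w
        simp only [Finset.mem_filter, Finset.mem_univ, true_and, Finset.notMem_empty,
          iff_false, Sym2.eq_iff]
        rintro (⟨h, -⟩ | ⟨h, -⟩)
        · exact h1 h
        · exact h2 h
      rw [h, Finset.card_empty]

lemma cardTrue (huv : u ≠ v) (e : Fin n) :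
    (Finset.univ.filter fun w : Fin n => s(e, w) ≠ s(u, v)).card
      + ((if e = u then 1 else 0) + (if e = v then 1 else 0)) = n := by
  rw [← cardEq huv e]
  have h := Finset.card_filter_add_card_filter_not
    (s := (Finset.univ : Finset (Fin n))) (p := fun w => s(e, w) = s(u, v))
  rw [Finset.card_univ, Fintype.card_fin] at h
  have h2 : (Finset.univ.filter fun w : Fin n => s(e, w) ≠ s(u, v))
      = (Finset.univ.filter fun a : Fin n => ¬s(e, a) = s(u, v)) := by
    apply Finset.filter_congr
    intro w _
    simp
  rw [h2]
  omega

lemma cardU (huv : u ≠ v) (e : Fin n)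
    {inst : DecidablePred fun w : Fin n => s(e, w) ≠ s(u, v) ∧ w = u} :
    (@Finset.filter _ _ inst Finset.univ).card
      = if e = v then 0 else 1 := by
  by_cases h : e = v
  · rw [if_pos h]
    subst h
    refine Finset.card_eq_zero.2 ?_
    ext w
    simp only [Finset.mem_filter, Finset.mem_univ, true_and, Finset.notMem_empty, iff_false]
    rintro ⟨h1, rfl⟩
    exact h1 (Sym2.eq_iff.2 (Or.inr ⟨rfl, rfl⟩))
  · rw [if_neg h]
    refine Finset.card_eq_one.2 ⟨u, ?_⟩
    ext w
    simp only [Finset.mem_filter, Finset.mem_univ, true_and, Finset.mem_singleton]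
    constructor
    · rintro ⟨-, h2⟩; exact h2
    · rintro rfl
      refine ⟨fun hc => ?_, rfl⟩
      rcases Sym2.eq_iff.1 hc with ⟨-, h3⟩ | ⟨h3, -⟩
      · exact huv h3
      · exact h h3

lemma cardV (huv : u ≠ v) (e : Fin n)
    {inst : DecidablePred fun w : Fin n => s(e, w) ≠ s(u, v) ∧ w = v} :
    (@Finset.filter _ _ inst Finset.univ).card
      = if e = u then 0 else 1 := by
  by_cases h : e = u
  · rw [if_pos h]
    subst h
    refine Finset.card_eq_zero.2 ?_
    ext w
    simp only [Finset.mem_filter, Finset.mem_univ, true_and, Finset.notMem_empty, iff_false]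
    rintro ⟨h1, rfl⟩
    exact h1 (Sym2.eq_iff.2 (Or.inl ⟨rfl, rfl⟩))
  · rw [if_neg h]
    refine Finset.card_eq_one.2 ⟨v, ?_⟩
    ext w
    simp only [Finset.mem_filter, Finset.mem_univ, true_and, Finset.mem_singleton]
    constructor
    · rintro ⟨-, h2⟩; exact h2
    · rintro rfl
      refine ⟨fun hc => ?_, rfl⟩
      rcases Sym2.eq_iff.1 hc with ⟨h3, -⟩ | ⟨-, h3⟩
      · exact h h3
      · exact huv h3.symm

end EL3

section EL4
variable {n : ℕ} {u v : Fin n}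

lemma elCnt_zero (p : Fin n → Prop) :
    elCnt u v 0 p = (Finset.univ.filter p).card := by
  rw [elCnt, Finset.card_filter, Fintype.sum_prod_type, Finset.card_filter]
  refine Fintype.sum_congr _ _ fun l => ?_
  have hval : ∀ f : Fin 0 → Fin n, elValid u v 0 (l, f) := by
    intro f ℓ hℓ
    exact absurd hℓ (Nat.not_lt_zero ℓ)
  have hw : ∀ f : Fin 0 → Fin n, walkSeq 0 l f 0 = l := by
    intro f
    simp [walkSeq]
  calc (∑ f : Fin 0 → Fin n, if elValid u v 0 (l, f) ∧ p (walkSeq 0 l f 0) then 1 else 0)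
      = ∑ _f : Fin 0 → Fin n, if p l then 1 else 0 := by
        refine Fintype.sum_congr _ _ fun f => ?_
        rw [hw f]
        congr 1
        rw [eq_iff_iff]
        exact ⟨fun h => h.2, fun h => ⟨hval f, h⟩⟩
    _ = if p l then 1 else 0 := by
        rw [Finset.sum_const, Finset.card_univ]
        simp

lemma elCnt_zero_true : elCnt u v 0 (fun _ => True) = n := by
  rw [elCnt_zero]
  simp

lemma elCnt_zero_u : elCnt u v 0 (fun w => w = u) = 1 := by
  rw [elCnt_zero]
  have h : (Finset.univ.filter fun w : Fin n => w = u) = {u} := by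
    ext w; simp
  rw [Finset.filter_congr_decidable, h, Finset.card_singleton]

lemma elCnt_zero_v : elCnt u v 0 (fun w => w = v) = 1 := by
  rw [elCnt_zero]
  have h : (Finset.univ.filter fun w : Fin n => w = v) = {v} := by
    ext w; simp
  rw [Finset.filter_congr_decidable, h, Finset.card_singleton]

lemma recT (huv : u ≠ v) (t : ℕ) :
    elCnt u v (t+1) (fun _ => True)
      + (elCnt u v t (fun w => w = u) + elCnt u v t (fun w => w = v))
      = n * elCnt u v t (fun _ => True) := by
  rw [elCnt_succ, elCnt, elCnt, elCnt, Finset.card_filter, Finset.card_filter,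
    Finset.card_filter, Finset.mul_sum, ← Finset.sum_add_distrib, ← Finset.sum_add_distrib]
  refine Finset.sum_congr rfl fun g _ => ?_
  by_cases hv : elValid u v t g
  · simp only [hv, true_and, and_true, if_true, mul_one, Finset.filter_congr_decidable]
    exact cardTrue huv _
  · simp [hv]

lemma recU (huv : u ≠ v) (t : ℕ) :
    elCnt u v (t+1) (fun w => w = u) + elCnt u v t (fun w => w = v)
      = elCnt u v t (fun _ => True) := by
  rw [elCnt_succ, elCnt, elCnt, Finset.card_filter, Finset.card_filter,
    ← Finset.sum_add_distrib]
  refine Finset.sum_congr rfl fun g _ => ?_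
  by_cases hv : elValid u v t g
  · simp only [hv, true_and, and_true, if_true, Finset.filter_congr_decidable]
    rw [cardU huv (walkSeq t g.1 g.2 t)]
    by_cases he : walkSeq t g.1 g.2 t = v <;> simp [he]
  · simp [hv]

lemma recV (huv : u ≠ v) (t : ℕ) :
    elCnt u v (t+1) (fun w => w = v) + elCnt u v t (fun w => w = u)
      = elCnt u v t (fun _ => True) := by
  rw [elCnt_succ, elCnt, elCnt, Finset.card_filter, Finset.card_filter,
    ← Finset.sum_add_distrib]
  refine Finset.sum_congr rfl fun g _ => ?_
  by_cases hv : elValid u v t g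
  · simp only [hv, true_and, and_true, if_true, Finset.filter_congr_decidable]
    rw [cardV huv (walkSeq t g.1 g.2 t)]
    by_cases he : walkSeq t g.1 g.2 t = u <;> simp [he]
  · simp [hv]

end EL4

section EL5
variable {n : ℕ} {u v : Fin n}

lemma invar (huv : u ≠ v) (hn : 2 ≤ n) : ∀ t : ℕ,
    n * (elCnt u v t (fun w => w = u) + elCnt u v t (fun w => w = v))
        ≤ 2 * elCnt u v t (fun _ => True)
      ∧ 2 * elCnt u v t (fun _ => True)
        ≤ (n + 1) * (elCnt u v t (fun w => w = u) + elCnt u v t (fun w => w = v)) := by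
  intro t
  induction t with
  | zero =>
      rw [elCnt_zero_true, elCnt_zero_u, elCnt_zero_v]
      omega
  | succ t ih =>
      obtain ⟨ih1, ih2⟩ := ih
      have h1 := recT huv t
      have h2 := recU huv t
      have h3 := recV huv t
      set b := elCnt u v t (fun _ => True)
      set x := elCnt u v t (fun w => w = u)
      set y := elCnt u v t (fun w => w = v)
      set b' := elCnt u v (t+1) (fun _ => True)
      set x' := elCnt u v (t+1) (fun w => w = u)
      set y' := elCnt u v (t+1) (fun w => w = v)
      have hsum : (x' + y') + (x + y) = 2 * b := by omega
      have key : n * (x' + y') + n * (x + y) = 2 * b' + 2 * (x + y) := by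
        calc n * (x' + y') + n * (x + y) = n * ((x' + y') + (x + y)) := by ring
          _ = n * (2 * b) := by rw [hsum]
          _ = 2 * (n * b) := by ring
          _ = 2 * (b' + (x + y)) := by rw [h1]
          _ = 2 * b' + 2 * (x + y) := by ring
      have h2a : 2 * (x + y) ≤ n * (x + y) := Nat.mul_le_mul_right _ hn
      have hexp : (n + 1) * (x' + y') = n * (x' + y') + (x' + y') := by ring
      obtain ⟨p, hp⟩ : ∃ p, n * (x' + y') = p := ⟨_, rfl⟩
      obtain ⟨q, hq⟩ : ∃ q, n * (x + y) = q := ⟨_, rfl⟩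
      rw [hp, hq] at key
      rw [hq] at h2a ih1
      rw [hexp, hp]
      clear ih2 h1 hexp hp hq
      omega

end EL5

section EL6
variable {n : ℕ} {u v : Fin n}

lemma realBounds (huv : u ≠ v) (hn : 2 ≤ n) : ∀ t : ℕ,
    ((1:ℝ) - 1/(n.choose 2 : ℝ))^t * (n:ℝ)^(t+1) ≤ (elCnt u v t (fun _ => True) : ℝ)
    ∧ (elCnt u v t (fun _ => True) : ℝ)
        ≤ ((1:ℝ) - 1/((n.choose 2 : ℝ) + n))^t * (n:ℝ)^(t+1) := by
  have hc : (2:ℝ) ≤ (n:ℝ) := by exact_mod_cast hn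
  set c : ℝ := (n:ℝ) with hcdef
  set C : ℝ := (n.choose 2 : ℝ) with hCdef
  have hC : C = c * (c - 1) / 2 := by
    rw [hCdef, hcdef]
    exact Nat.cast_choose_two (K := ℝ) n
  have hC2 : 2 * C = c * (c - 1) := by rw [hC]; ring
  have hC1 : 1 ≤ C := by nlinarith
  have hC0 : 0 < C := by linarith
  have hCc0 : 0 < C + c := by linarith
  have hfac1 : 0 ≤ (1 - 1/C) * c := by
    have h : 1/C ≤ 1 := by rw [div_le_one hC0]; exact hC1
    nlinarith
  have hfac2 : 0 ≤ (1 - 1/(C+c)) * c := by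
    have h : 1/(C+c) ≤ 1 := by rw [div_le_one hCc0]; linarith
    nlinarith
  intro t
  induction t with
  | zero =>
      rw [elCnt_zero_true]
      constructor <;> simp [pow_one, hcdef]
  | succ t ih =>
      obtain ⟨ih1, ih2⟩ := ih
      have h1 := recT huv t
      have h2 := (invar huv hn t).1
      have h3 := (invar huv hn t).2
      set bN := elCnt u v t (fun _ => True) with hbN
      set xN := elCnt u v t (fun w => w = u) with hxN
      set yN := elCnt u v t (fun w => w = v) with hyN
      set bN' := elCnt u v (t+1) (fun _ => True) with hbN'
      have hI : (bN' : ℝ) + ((xN:ℝ) + (yN:ℝ)) = c * (bN:ℝ) := by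
        rw [hcdef]; exact_mod_cast h1
      have hinv1 : c * ((xN:ℝ) + (yN:ℝ)) ≤ 2 * (bN:ℝ) := by
        rw [hcdef]; exact_mod_cast h2
      have hinv2 : 2 * (bN:ℝ) ≤ (c + 1) * ((xN:ℝ) + (yN:ℝ)) := by
        rw [hcdef]; exact_mod_cast h3
      set T : ℝ := (bN : ℝ) with hT
      set D : ℝ := (xN:ℝ) + (yN:ℝ) with hD
      have hT0 : (0:ℝ) ≤ T := Nat.cast_nonneg _
      have hD0 : (0:ℝ) ≤ D := by positivity
      constructor
      · have key : (1 - 1/C) * (c * T) ≤ c * T - D := by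
          have h4 : (1 - 1/C) * (c * T) = c * T - (c * T)/C := by ring
          have h5 : D ≤ (c * T)/C := by
            rw [le_div_iff₀ hC0]
            have e1 : 2*(D*C) = (c*D)*(c-1) := by
              calc 2*(D*C) = D*(2*C) := by ring
                _ = D*(c*(c-1)) := by rw [hC2]
                _ = (c*D)*(c-1) := by ring
            have e2 : (c*D)*(c-1) ≤ (2*T)*(c-1) :=
              mul_le_mul_of_nonneg_right hinv1 (by linarith)
            have e3 : (2*T)*(c-1) = 2*(c*T) - 2*T := by ring
            linarith
          linarith
        calc (1 - 1/C)^(t+1) * c^(t+1+1)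
            = ((1 - 1/C) * c) * ((1 - 1/C)^t * c^(t+1)) := by ring
          _ ≤ ((1 - 1/C) * c) * T := mul_le_mul_of_nonneg_left ih1 hfac1
          _ = (1 - 1/C) * (c * T) := by ring
          _ ≤ c * T - D := key
          _ = (bN' : ℝ) := by linarith
      · have key : c * T - D ≤ (1 - 1/(C+c)) * (c * T) := by
          have h4 : (1 - 1/(C+c)) * (c * T) = c * T - (c * T)/(C+c) := by ring
          have h5 : (c * T)/(C+c) ≤ D := by
            rw [div_le_iff₀ hCc0]
            have e1 : 2*(D*(C+c)) = c*((c+1)*D) := by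
              calc 2*(D*(C+c)) = D*(2*C) + 2*(D*c) := by ring
                _ = D*(c*(c-1)) + 2*(D*c) := by rw [hC2]
                _ = c*((c+1)*D) := by ring
            have e2 : c*(2*T) ≤ c*((c+1)*D) :=
              mul_le_mul_of_nonneg_left hinv2 (by linarith)
            have e3 : c*(2*T) = 2*(c*T) := by ring
            linarith
          linarith
        calc (bN' : ℝ)
            = c * T - D := by linarith
          _ ≤ (1 - 1/(C+c)) * (c * T) := key
          _ = ((1 - 1/(C+c)) * c) * T := by ring
          _ ≤ ((1 - 1/(C+c)) * c) * ((1 - 1/(C+c))^t * c^(t+1)) :=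
              mul_le_mul_of_nonneg_left ih2 hfac2
          _ = (1 - 1/(C+c))^(t+1) * c^(t+1+1) := by ring

end EL6

section EL7
variable {n : ℕ} {u v : Fin n}

lemma travProb_eq (t : ℕ) :
    travProb n t u v = (elCnt u v t (fun _ => True) : ℝ) / (n:ℝ)^(t+1) := by
  rw [travProb, elCnt]
  have h : (Finset.univ.filter fun g : Fin n × (Fin t → Fin n) =>
        ∀ ℓ < t, s(walkSeq t g.1 g.2 ℓ, walkSeq t g.1 g.2 (ℓ + 1)) ≠ s(u, v))
      = (Finset.univ.filter fun g : Fin n × (Fin t → Fin n) =>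
        elValid u v t g ∧ True) := by
    apply Finset.filter_congr
    intro g _
    simp [elValid]
  rw [h]
  congr 3
  ext g
  simp only [Finset.mem_filter]

end EL7

/-- vertices has not been traversed by the edgelighter by time `t`. -/
theorem travProb_bounds (n : ℕ) (hn : 2 ≤ n) (t : ℕ) (ht : 1 ≤ t)
    (u v : Fin n) (huv : u ≠ v) :
    ((1 : ℝ) - 1 / (n.choose 2 : ℝ)) ^ t ≤ travProb n t u v ∧
      travProb n t u v ≤ ((1 : ℝ) - 1 / ((n.choose 2 : ℝ) + n)) ^ ((t + 1) / 2) := by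
  obtain ⟨hL, hU⟩ := realBounds (u := u) (v := v) huv hn t
  have hc : (2:ℝ) ≤ (n:ℝ) := by exact_mod_cast hn
  have hpow : (0:ℝ) < (n:ℝ)^(t+1) := by positivity
  have hch0 : (0:ℝ) ≤ (n.choose 2 : ℝ) := Nat.cast_nonneg _
  rw [travProb_eq]
  constructor
  · rw [le_div_iff₀ hpow]
    exact hL
  · refine le_trans ?_ (pow_le_pow_of_le_one ?_ ?_ (show (t+1)/2 ≤ t by omega))
    · rw [div_le_iff₀ hpow]
      exact hU
    · have h1 : (0:ℝ) < (n.choose 2 : ℝ) + n := by linarith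
      have h2 : 1/((n.choose 2:ℝ) + n) ≤ 1 := by
        rw [div_le_one h1]
        linarith
      linarith
    · have h3 : (0:ℝ) ≤ 1/((n.choose 2:ℝ) + n) := by positivity
      linarith
end

section
/- Consider the standard edgelighter walk on n vertices with n > 3 and the initial walker position uniform on V, and for a fixed pair {u,v} of distinct vertices and t ≥ 1 let 𝔭_{t,u,v} = P({u,v} ≠ {L_s, L_{s+1}} for all 0 ≤ s ≤ t−1). Then 𝔭_{t,u,v} ≤ exp(−⌊(t+1)/2⌋/(binom(n,2) + n)) and 𝔭_{t,u,v} ≥ exp(−t/(binom(n,2) − 1)); in particular 𝔭_{t,u,v} = exp(−Θ(t/n²)). -/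
open scoped BigOperators
open scoped Classical
open Finset Matrix

noncomputable section EL

/-- good paths of length t (t steps, t+1 positions) avoiding edge {u,v} -/
def gp (n t : ℕ) (u v : Fin n) : Finset (Fin (t+1) → Fin n) :=
  Finset.univ.filter fun p => ∀ i : Fin t, s(p i.castSucc, p i.succ) ≠ s(u, v)

def gpe (n t : ℕ) (u v w : Fin n) : Finset (Fin (t+1) → Fin n) :=
  (gp n t u v).filter fun p => p (Fin.last t) = w

lemma gp_zero (n : ℕ) (u v : Fin n) : (gp n 0 u v).card = n := by
  have : gp n 0 u v = Finset.univ := by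
    ext p; simp only [gp, Finset.mem_filter, Finset.mem_univ, true_and]
    exact iff_of_true (fun i => i.elim0) trivial
  rw [this]
  simp [Finset.card_univ]

lemma gpe_zero (n : ℕ) (u v w : Fin n) : (gpe n 0 u v w).card = 1 := by
  rw [Finset.card_eq_one]
  refine ⟨fun _ => w, ?_⟩
  ext p
  constructor
  · intro hp
    simp only [gpe, Finset.mem_filter] at hp
    simp only [Finset.mem_singleton]
    funext i
    have : i = Fin.last 0 := Fin.fin_one_eq_zero i
    rw [this, hp.2]
  · intro hp
    simp only [Finset.mem_singleton] at hp
    subst hp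
    refine Finset.mem_filter.2 ⟨Finset.mem_filter.2 ⟨Finset.mem_univ _, fun i => i.elim0⟩, rfl⟩

lemma gpe_le_gp (n t : ℕ) (u v w : Fin n) : (gpe n t u v w).card ≤ (gp n t u v).card :=
  Finset.card_le_card (Finset.filter_subset _ _)

/-- symmetry: ending at u and ending at v are equinumerous -/
lemma gpe_symm (n t : ℕ) (u v : Fin n) :
    (gpe n t u v u).card = (gpe n t u v v).card := by
  apply Finset.card_bij (fun p _ => (Equiv.swap u v) ∘ p)
  · intro p hp
    simp only [gpe, gp, Finset.mem_filter, Finset.mem_univ, true_and] at hp ⊢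
    obtain ⟨h1, h2⟩ := hp
    refine ⟨?_, by simp [Function.comp, h2]⟩
    intro i hcon
    apply h1 i
    rw [Sym2.eq_iff] at hcon ⊢
    rcases hcon with ⟨ha, hb⟩ | ⟨ha, hb⟩
    · right
      constructor
      · have := congrArg (Equiv.swap u v) ha
        simpa using this
      · have := congrArg (Equiv.swap u v) hb
        simpa using this
    · left
      constructor
      · have := congrArg (Equiv.swap u v) ha
        simpa using this
      · have := congrArg (Equiv.swap u v) hb
        simpa using this
  · intro p1 h1 p2 h2 h
    funext i
    have := congrFun h i
    simpa using congrArg (Equiv.swap u v) this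
  · intro p hp
    refine ⟨(Equiv.swap u v) ∘ p, ?_, ?_⟩
    · simp only [gpe, gp, Finset.mem_filter, Finset.mem_univ, true_and] at hp ⊢
      obtain ⟨h1, h2⟩ := hp
      refine ⟨?_, by simp [Function.comp, h2]⟩
      intro i hcon
      apply h1 i
      rw [Sym2.eq_iff] at hcon ⊢
      rcases hcon with ⟨ha, hb⟩ | ⟨ha, hb⟩
      · right
        exact ⟨by have := congrArg (Equiv.swap u v) ha; simpa using this,
               by have := congrArg (Equiv.swap u v) hb; simpa using this⟩
      · left
        exact ⟨by have := congrArg (Equiv.swap u v) ha; simpa using this,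
               by have := congrArg (Equiv.swap u v) hb; simpa using this⟩
    · funext i; simp

end EL

section REC
variable {n t : ℕ} {u v : Fin n}

noncomputable def badw (q : Fin (t+1) → Fin n) (u v : Fin n) : Finset (Fin n) :=
  Finset.univ.filter fun w : Fin n => s(q (Fin.last t), w) ≠ s(u, v)

lemma gp_succ_card :
    (gp n (t+1) u v).card = ∑ q ∈ gp n t u v, (badw q u v).card := by
  rw [← Finset.card_sigma]
  apply Finset.card_bij (fun p _ => (⟨Fin.init p, p (Fin.last (t+1))⟩ :
    Σ _ : Fin (t+1) → Fin n, Fin n))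
  · intro p hp
    simp only [gp, Finset.mem_filter, Finset.mem_univ, true_and] at hp
    refine Finset.mem_sigma.2 ⟨?_, ?_⟩
    · simp only [gp, Finset.mem_filter, Finset.mem_univ, true_and]
      intro j
      have := hp j.castSucc
      rwa [Fin.succ_castSucc] at this
      -- init p j.castSucc = p j.castSucc.castSucc etc, defeq?
    · simp only [badw, Finset.mem_filter, Finset.mem_univ, true_and]
      have := hp (Fin.last t)
      rwa [Fin.succ_last] at this
  · intro p1 h1 p2 h2 h
    have hfst : Fin.init p1 = Fin.init p2 := congrArg Sigma.fst h
    have hsnd : p1 (Fin.last (t+1)) = p2 (Fin.last (t+1)) :=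
      congrArg (fun s : Σ _ : Fin (t+1) → Fin n, Fin n => s.2) h
    have e1 := Fin.snoc_init_self p1
    have e2 := Fin.snoc_init_self p2
    rw [← e1, ← e2, hfst, hsnd]
  · rintro ⟨q, w⟩ hqw
    rw [Finset.mem_sigma] at hqw
    obtain ⟨hq, hw⟩ := hqw
    simp only [gp, Finset.mem_filter, Finset.mem_univ, true_and] at hq
    simp only [badw, Finset.mem_filter, Finset.mem_univ, true_and] at hw
    refine ⟨Fin.snoc q w, ?_, ?_⟩
    · simp only [gp, Finset.mem_filter, Finset.mem_univ, true_and]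
      intro i
      refine Fin.lastCases ?_ ?_ i
      · rw [Fin.succ_last, Fin.snoc_last, Fin.snoc_castSucc]
        exact hw
      · intro j
        rw [Fin.succ_castSucc, Fin.snoc_castSucc, Fin.snoc_castSucc]
        exact hq j
    · have e1 : Fin.init (Fin.snoc q w : Fin (t+1+1) → Fin n) = q := Fin.init_snoc (α := fun _ => Fin n) w q
      have e2 : (Fin.snoc q w : Fin (t+1+1) → Fin n) (Fin.last (t+1)) = w := Fin.snoc_last (α := fun _ => Fin n) w q
      rw [e1, e2]

lemma badw_card (huv : u ≠ v) (q : Fin (t+1) → Fin n) :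
    (badw q u v).card
      + ((if q (Fin.last t) = u then 1 else 0) + (if q (Fin.last t) = v then 1 else 0))
      = n := by
  by_cases h1 : q (Fin.last t) = u
  · have : badw q u v = Finset.univ.erase v := by
      rw [← Finset.filter_ne']
      apply Finset.filter_congr
      intro w _
      simp [badw, Sym2.eq_iff, h1, huv, huv.symm]
    rw [this, if_pos h1, if_neg (by rw [h1]; exact huv)]
    have := Finset.card_erase_add_one (Finset.mem_univ v)
    simp only [Finset.card_univ, Fintype.card_fin] at this
    omega
  · by_cases h2 : q (Fin.last t) = v
    · have : badw q u v = Finset.univ.erase u := by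
        rw [← Finset.filter_ne']
        apply Finset.filter_congr
        intro w _
        simp [badw, Sym2.eq_iff, h2, h1, huv, huv.symm]
      rw [this, if_neg h1, if_pos h2]
      have := Finset.card_erase_add_one (Finset.mem_univ u)
      simp only [Finset.card_univ, Fintype.card_fin] at this
      omega
    · have : badw q u v = Finset.univ := by
        apply Finset.filter_true_of_mem
        intro w _
        simp [Sym2.eq_iff, h1, h2]
      rw [this, if_neg h1, if_neg h2]
      simp [Finset.card_univ]

/-- main recurrence for total counts -/
lemma gp_rec (huv : u ≠ v) :
    (gp n (t+1) u v).card + ((gpe n t u v u).card + (gpe n t u v v).card)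
      = n * (gp n t u v).card := by
  have h1 : (gpe n t u v u).card = ∑ q ∈ gp n t u v, if q (Fin.last t) = u then 1 else 0 :=
    Finset.card_filter _ _
  have h2 : (gpe n t u v v).card = ∑ q ∈ gp n t u v, if q (Fin.last t) = v then 1 else 0 :=
    Finset.card_filter _ _
  rw [gp_succ_card, h1, h2, ← Finset.sum_add_distrib, ← Finset.sum_add_distrib]
  rw [Finset.sum_congr rfl (fun q _ => badw_card huv q)]
  simp [Finset.sum_const, mul_comm]

/-- recurrence for end-counts -/
lemma gpe_rec (huv : u ≠ v) :
    (gpe n (t+1) u v u).card + (gpe n t u v v).card = (gp n t u v).card := by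
  have key : (gpe n (t+1) u v u).card
      = ((gp n t u v).filter fun q => ¬ (q (Fin.last t) = v)).card := by
    apply Finset.card_bij (fun p _ => Fin.init p)
    · intro p hp
      simp only [gpe, gp, Finset.mem_filter, Finset.mem_univ, true_and] at hp
      obtain ⟨h1, h2⟩ := hp
      simp only [gp, Finset.mem_filter, Finset.mem_univ, true_and]
      constructor
      · intro j
        have := h1 j.castSucc
        rwa [Fin.succ_castSucc] at this
      · intro hcon
        have := h1 (Fin.last t)
        rw [Fin.succ_last, h2] at this
        apply this
        have : Fin.init p (Fin.last t) = p (Fin.last t).castSucc := rfl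
        rw [this] at hcon
        rw [hcon]
        rw [Sym2.eq_iff]
        tauto
    · intro p1 h1 p2 h2 h
      simp only [gpe, Finset.mem_filter] at h1 h2
      have e1 := Fin.snoc_init_self p1
      have e2 := Fin.snoc_init_self p2
      rw [← e1, ← e2, h, h1.2, h2.2]
    · intro q hq
      simp only [gp, Finset.mem_filter, Finset.mem_univ, true_and] at hq
      obtain ⟨hq1, hq2⟩ := hq
      have e1 : Fin.init (Fin.snoc q u : Fin (t+1+1) → Fin n) = q := Fin.init_snoc (α := fun _ => Fin n) u q
      refine ⟨Fin.snoc q u, ?_, e1⟩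
      simp only [gpe, gp, Finset.mem_filter, Finset.mem_univ, true_and]
      refine ⟨?_, Fin.snoc_last (α := fun _ => Fin n) u q⟩
      intro i
      refine Fin.lastCases ?_ ?_ i
      · rw [Fin.succ_last, Fin.snoc_last, Fin.snoc_castSucc]
        intro hcon
        rw [Sym2.eq_iff] at hcon
        rcases hcon with ⟨_, hb⟩ | ⟨ha, _⟩
        · exact huv hb
        · exact hq2 ha
      · intro j
        rw [Fin.succ_castSucc, Fin.snoc_castSucc, Fin.snoc_castSucc]
        exact hq1 j
  rw [key]
  have hsplit := Finset.card_filter_add_card_filter_not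
    (s := gp n t u v) (p := fun q => q (Fin.last t) = v)
  have he : (gpe n t u v v).card = ((gp n t u v).filter fun q => q (Fin.last t) = v).card := rfl
  beta_reduce at hsplit
  rw [he]
  linarith [hsplit]

end REC

section INV
variable {n : ℕ} {u v : Fin n}

lemma xx_symm (t : ℕ) : (gpe n t u v u).card = (gpe n t u v v).card := gpe_symm n t u v

lemma aa_rec (huv : u ≠ v) (t : ℕ) :
    (gp n (t+1) u v).card + 2 * (gpe n t u v u).card = n * (gp n t u v).card := by
  have := gp_rec (t := t) huv
  have hs := xx_symm (u := u) (v := v) t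
  omega

lemma xx_rec (huv : u ≠ v) (t : ℕ) :
    (gpe n (t+1) u v u).card + (gpe n t u v u).card = (gp n t u v).card := by
  have := gpe_rec (t := t) huv
  have hs := xx_symm (u := u) (v := v) t
  omega

lemma invariant (hn : 4 ≤ n) (huv : u ≠ v) (t : ℕ) :
    1 ≤ (gpe n t u v u).card ∧
      (n-1) * (gpe n t u v u).card ≤ (gp n t u v).card ∧
      (gp n t u v).card ≤ (n+1) * (gpe n t u v u).card := by
  induction t with
  | zero =>
    rw [gp_zero, gpe_zero]
    omega
  | succ t ih =>
    obtain ⟨hx1, hlo, hhi⟩ := ih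
    have h1 := aa_rec huv t
    have h2 := xx_rec huv t
    set a := (gp n t u v).card with ha
    set x := (gpe n t u v u).card with hx
    set a' := (gp n (t+1) u v).card with ha'
    set x' := (gpe n (t+1) u v u).card with hx'
    have hn1 : (1:ℕ) ≤ n := by omega
    -- cast to integers
    have H1 : (a' : ℤ) + 2 * x = n * a := by exact_mod_cast h1
    have H2 : (x' : ℤ) + x = a := by exact_mod_cast h2
    have Hlo : ((n:ℤ) - 1) * x ≤ a := by
      have := hlo
      zify [hn1] at this
      exact this
    have hnz : (4:ℤ) ≤ n := by exact_mod_cast hn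
    have hxz : (1:ℤ) ≤ x := by exact_mod_cast hx1
    have hx'nn : (0:ℤ) ≤ x' := by positivity
    have H3 : (n:ℤ) * a = n * x' + n * x := by rw [← H2]; ring
    have H4 : 2 * (x:ℤ) ≤ (n:ℤ) * x := by nlinarith
    have H5 : ((n:ℤ) - 2) * 1 ≤ ((n:ℤ) - 2) * x := by nlinarith
    refine ⟨?_, ?_, ?_⟩
    · -- 1 ≤ x'
      have : (1:ℤ) ≤ x' := by nlinarith [Hlo, H2, H5]
      exact_mod_cast this
    · -- (n-1) * x' ≤ a'
      have : ((n:ℤ) - 1) * x' ≤ a' := by nlinarith [H1, H3, H4, hx'nn]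
      zify [hn1]
      exact this
    · -- a' ≤ (n+1) * x'
      have : (a' : ℤ) ≤ ((n:ℤ) + 1) * x' := by nlinarith [H1, H3, Hlo, H2]
      exact_mod_cast this

end INV

section ANA
variable {n : ℕ} {u v : Fin n}

lemma lower_bound (hn : 4 ≤ n) (huv : u ≠ v) (t : ℕ) :
    (n:ℝ) ^ (t+1) * Real.exp (-(t:ℝ) * (2 / ((n:ℝ) * ((n:ℝ) - 1) - 2)))
      ≤ ((gp n t u v).card : ℝ) := by
  have hn4 : (4:ℝ) ≤ (n:ℝ) := by exact_mod_cast hn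
  set c : ℝ := 2 / ((n:ℝ) * ((n:ℝ) - 1) - 2) with hc
  have hD : (0:ℝ) < (n:ℝ) * ((n:ℝ) - 1) - 2 := by nlinarith
  have hcpos : 0 < c := by positivity
  -- key one-step factor inequality
  have key : (n:ℝ) * Real.exp (-c) ≤ (n:ℝ) - 2 / ((n:ℝ) - 1) := by
    have h1 : Real.exp (-c) ≤ 1 / (1 + c) := by
      rw [Real.exp_neg]
      rw [inv_le_iff_one_le_mul₀ (Real.exp_pos c)] at *
      · rw [div_mul_eq_mul_div, le_div_iff₀ (by positivity)]
        have := Real.add_one_le_exp c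
        nlinarith [Real.exp_pos c]
    have h2 : (n:ℝ) * (1 / (1 + c)) = (n:ℝ) - 2 / ((n:ℝ) - 1) := by
      rw [hc]
      have hne : (n:ℝ) * ((n:ℝ) - 1) - 2 ≠ 0 := ne_of_gt hD
      have hn1 : (n:ℝ) - 1 ≠ 0 := by nlinarith
      field_simp
      ring
    calc (n:ℝ) * Real.exp (-c) ≤ (n:ℝ) * (1 / (1 + c)) := by
          apply mul_le_mul_of_nonneg_left h1 (by positivity)
      _ = (n:ℝ) - 2 / ((n:ℝ) - 1) := h2
  induction t with
  | zero =>
    rw [gp_zero]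
    simp
  | succ t ih =>
    have h1 := aa_rec huv t
    obtain ⟨hx1, hlo, hhi⟩ := invariant hn huv t
    set a := (gp n t u v).card with ha
    set x := (gpe n t u v u).card with hx
    have H1 : ((gp n (t+1) u v).card : ℝ) + 2 * x = n * a := by exact_mod_cast h1
    have Hlo : ((n:ℝ) - 1) * x ≤ a := by
      have : (((n-1) * x : ℕ) : ℝ) ≤ (a:ℝ) := by exact_mod_cast hlo
      push_cast [Nat.cast_sub (by omega : 1 ≤ n)] at this
      linarith
    have hxr : 2 * (x:ℝ) ≤ (2 / ((n:ℝ) - 1)) * a := by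
      rw [div_mul_eq_mul_div, le_div_iff₀ (by nlinarith)]
      nlinarith
    have step : ((gp n t u v).card : ℝ) * ((n:ℝ) - 2 / ((n:ℝ) - 1))
        ≤ ((gp n (t+1) u v).card : ℝ) := by
      have : ((gp n (t+1) u v).card : ℝ) = n * a - 2 * x := by linarith
      rw [this]
      rw [← ha]
      nlinarith [hxr]
    calc (n:ℝ) ^ (t+1+1) * Real.exp (-(((t+1):ℕ):ℝ) * c)
        = ((n:ℝ) ^ (t+1) * Real.exp (-(t:ℝ) * c)) * ((n:ℝ) * Real.exp (-c)) := by
          rw [show (-(((t+1):ℕ):ℝ) * c) = (-(t:ℝ)*c) + (-c) by push_cast; ring, Real.exp_add]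
          ring
      _ ≤ ((gp n t u v).card : ℝ) * ((n:ℝ) - 2 / ((n:ℝ) - 1)) := by
          apply mul_le_mul ih key (by positivity) (by positivity)
      _ ≤ ((gp n (t+1) u v).card : ℝ) := step

lemma upper_bound (hn : 4 ≤ n) (huv : u ≠ v) (t : ℕ) :
    ((gp n t u v).card : ℝ)
      ≤ (n:ℝ) ^ (t+1) * Real.exp (-(t:ℝ) * (2 / ((n:ℝ) * ((n:ℝ) + 1)))) := by
  have hn4 : (4:ℝ) ≤ (n:ℝ) := by exact_mod_cast hn
  set d : ℝ := 2 / ((n:ℝ) * ((n:ℝ) + 1)) with hd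
  have hDpos : (0:ℝ) < (n:ℝ) * ((n:ℝ) + 1) := by nlinarith
  have hdpos : 0 < d := by positivity
  have key : (n:ℝ) - 2 / ((n:ℝ) + 1) ≤ (n:ℝ) * Real.exp (-d) := by
    have h1 : 1 - d ≤ Real.exp (-d) := by
      have := Real.add_one_le_exp (-d)
      linarith
    have h2 : (n:ℝ) * (1 - d) = (n:ℝ) - 2 / ((n:ℝ) + 1) := by
      rw [hd]
      have hn1 : (n:ℝ) + 1 ≠ 0 := by nlinarith
      field_simp
    calc (n:ℝ) - 2 / ((n:ℝ) + 1) = (n:ℝ) * (1 - d) := h2.symm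
      _ ≤ (n:ℝ) * Real.exp (-d) := by
          apply mul_le_mul_of_nonneg_left h1 (by positivity)
  induction t with
  | zero =>
    rw [gp_zero]
    simp
  | succ t ih =>
    have h1 := aa_rec huv t
    obtain ⟨hx1, hlo, hhi⟩ := invariant hn huv t
    set a := (gp n t u v).card with ha
    set x := (gpe n t u v u).card with hx
    have H1 : ((gp n (t+1) u v).card : ℝ) + 2 * x = n * a := by exact_mod_cast h1
    have Hhi : (a:ℝ) ≤ ((n:ℝ) + 1) * x := by exact_mod_cast hhi
    have hxr : (2 / ((n:ℝ) + 1)) * a ≤ 2 * (x:ℝ) := by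
      rw [div_mul_eq_mul_div, div_le_iff₀ (by nlinarith)]
      nlinarith
    have hfac : (0:ℝ) ≤ (n:ℝ) - 2 / ((n:ℝ) + 1) := by
      rw [sub_nonneg, div_le_iff₀ (by nlinarith)]
      nlinarith
    have step : ((gp n (t+1) u v).card : ℝ)
        ≤ ((gp n t u v).card : ℝ) * ((n:ℝ) - 2 / ((n:ℝ) + 1)) := by
      have : ((gp n (t+1) u v).card : ℝ) = n * a - 2 * x := by linarith
      rw [this, ← ha]
      nlinarith [hxr]
    calc ((gp n (t+1) u v).card : ℝ)
        ≤ ((gp n t u v).card : ℝ) * ((n:ℝ) - 2 / ((n:ℝ) + 1)) := step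
      _ ≤ ((n:ℝ) ^ (t+1) * Real.exp (-(t:ℝ) * d)) * ((n:ℝ) * Real.exp (-d)) := by
          apply mul_le_mul ih key hfac (by positivity)
      _ = (n:ℝ) ^ (t+1+1) * Real.exp (-(((t+1):ℕ):ℝ) * d) := by
          rw [show (-(((t+1):ℕ):ℝ) * d) = (-(t:ℝ)*d) + (-d) by push_cast; ring, Real.exp_add]
          ring

end ANA

section FIN
variable {n : ℕ}

lemma cons_eq_walkSeq {t : ℕ} (l0 : Fin n) (f : Fin t → Fin n) (j : Fin (t+1)) :
    Fin.cons (α := fun _ => Fin n) l0 f j = walkSeq t l0 f j.val := by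
  refine Fin.cases ?_ ?_ j
  · simp [walkSeq]
  · intro i
    rw [Fin.cons_succ]
    have : (i.succ : Fin (t+1)).val = i.val + 1 := rfl
    rw [this]
    have hi := i.isLt
    rw [walkSeq]
    rw [dif_pos ⟨Nat.succ_pos _, by omega⟩]
    have he : (⟨i.val + 1 - 1, by omega⟩ : Fin t) = i := by
      apply Fin.ext
      simp
    rw [he]

lemma travProb_card (t : ℕ) (u v : Fin n) :
    (Finset.univ.filter fun g : Fin n × (Fin t → Fin n) =>
      ∀ ℓ < t, s(walkSeq t g.1 g.2 ℓ, walkSeq t g.1 g.2 (ℓ + 1)) ≠ s(u, v)).card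
      = (gp n t u v).card := by
  apply Finset.card_bij (fun g _ => Fin.cons g.1 g.2)
  · rintro ⟨l0, f⟩ hg
    simp only [Finset.mem_filter, Finset.mem_univ, true_and] at hg
    simp only [gp, Finset.mem_filter, Finset.mem_univ, true_and]
    intro i
    have h1 := cons_eq_walkSeq l0 f i.castSucc
    have h2 := cons_eq_walkSeq l0 f i.succ
    have hc : (i.castSucc : Fin (t+1)).val = i.val := rfl
    have hs : (i.succ : Fin (t+1)).val = i.val + 1 := rfl
    rw [h1, h2, hc, hs]
    exact hg i.val i.isLt
  · rintro ⟨l1, f1⟩ h1 ⟨l2, f2⟩ h2 h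
    have hz : l1 = l2 := by
      have := congrFun h 0
      simpa using this
    have hf : f1 = f2 := by
      funext i
      have := congrFun h i.succ
      simpa using this
    rw [hz, hf]
  · intro p hp
    simp only [gp, Finset.mem_filter, Finset.mem_univ, true_and] at hp
    refine ⟨(p 0, Fin.tail p), ?_, Fin.cons_self_tail p⟩
    simp only [Finset.mem_filter, Finset.mem_univ, true_and]
    intro ℓ hℓ
    have h1 := cons_eq_walkSeq (p 0) (Fin.tail p) ((⟨ℓ, hℓ⟩ : Fin t).castSucc)
    have h2 := cons_eq_walkSeq (p 0) (Fin.tail p) ((⟨ℓ, hℓ⟩ : Fin t).succ)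
    rw [Fin.cons_self_tail] at h1 h2
    have hc : ((⟨ℓ, hℓ⟩ : Fin t).castSucc : Fin (t+1)).val = ℓ := rfl
    have hs : ((⟨ℓ, hℓ⟩ : Fin t).succ : Fin (t+1)).val = ℓ + 1 := rfl
    rw [hc] at h1
    rw [hs] at h2
    rw [← h1, ← h2]
    exact hp ⟨ℓ, hℓ⟩

theorem travProb_exp_bounds' (n : ℕ) (hn : 3 < n) (t : ℕ) (ht : 1 ≤ t)
    (u v : Fin n) (huv : u ≠ v) :
    travProb n t u v ≤ Real.exp (-(((t + 1) / 2 : ℕ) : ℝ) / ((n.choose 2 : ℝ) + n)) ∧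
      Real.exp (-(t : ℝ) / ((n.choose 2 : ℝ) - 1)) ≤ travProb n t u v := by
  have hn4 : 4 ≤ n := hn
  have hn4r : (4:ℝ) ≤ (n:ℝ) := by exact_mod_cast hn4
  have hpow : (0:ℝ) < (n:ℝ) ^ (t+1) := by positivity
  have hch : (n.choose 2 : ℝ) = (n:ℝ) * ((n:ℝ) - 1) / 2 := Nat.cast_choose_two ℝ n
  rw [travProb, travProb_card]
  constructor
  · -- upper bound
    rw [div_le_iff₀ hpow]
    calc ((gp n t u v).card : ℝ)
        ≤ (n:ℝ) ^ (t+1) * Real.exp (-(t:ℝ) * (2 / ((n:ℝ) * ((n:ℝ) + 1)))) :=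
          upper_bound hn4 huv t
      _ ≤ Real.exp (-(((t + 1) / 2 : ℕ) : ℝ) / ((n.choose 2 : ℝ) + n)) * (n:ℝ) ^ (t+1) := by
          rw [mul_comm]
          apply mul_le_mul_of_nonneg_right _ (le_of_lt hpow)
          apply Real.exp_le_exp.2
          have hm : (((t + 1) / 2 : ℕ) : ℝ) ≤ (t:ℝ) := by
            exact_mod_cast Nat.cast_le.2 (by omega : (t+1)/2 ≤ t)
          have hden : (n.choose 2 : ℝ) + n = (n:ℝ) * ((n:ℝ) + 1) / 2 := by
            rw [hch]; ring
          rw [hden]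
          have hN : ((n:ℝ) * ((n:ℝ) + 1)) ≠ 0 := by nlinarith
          rw [le_div_iff₀ (by nlinarith : (0:ℝ) < (n:ℝ) * ((n:ℝ) + 1) / 2)]
          have heq : (-(t:ℝ) * (2 / ((n:ℝ) * ((n:ℝ) + 1)))) * ((n:ℝ) * ((n:ℝ) + 1) / 2)
              = -(t:ℝ) := by
            field_simp
          rw [heq]
          linarith
  · -- lower bound
    rw [le_div_iff₀ hpow]
    have hden : (n.choose 2 : ℝ) - 1 = ((n:ℝ) * ((n:ℝ) - 1) - 2) / 2 := by
      rw [hch]; ring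
    calc Real.exp (-(t : ℝ) / ((n.choose 2 : ℝ) - 1)) * (n:ℝ) ^ (t+1)
        = (n:ℝ) ^ (t+1) * Real.exp (-(t:ℝ) * (2 / ((n:ℝ) * ((n:ℝ) - 1) - 2))) := by
          rw [hden, div_div_eq_mul_div, mul_div_assoc]
          ring
      _ ≤ ((gp n t u v).card : ℝ) := lower_bound hn4 huv t

end FIN


/-- Exponential bounds on the probability `𝔭_{t,u,v}` that a fixed pair
of distinct vertices has not been traversed by the edgelighter by time `t`:
`exp(-t/(C(n,2)-1)) ≤ 𝔭_{t,u,v} ≤ exp(-⌊(t+1)/2⌋/(C(n,2)+n))`. -/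
theorem travProb_exp_bounds (n : ℕ) (hn : 3 < n) (t : ℕ) (ht : 1 ≤ t)
    (u v : Fin n) (huv : u ≠ v) :
    travProb n t u v ≤ Real.exp (-(((t + 1) / 2 : ℕ) : ℝ) / ((n.choose 2 : ℝ) + n)) ∧
      Real.exp (-(t : ℝ) / ((n.choose 2 : ℝ) - 1)) ≤ travProb n t u v := by
  exact travProb_exp_bounds' n hn t ht u v huv
end

section
/- Let n ≥ 2 and q1, q2 ∈ (0,1), and let P denote the one-step transition probability function of the standard edgelighter walk on n vertices. Define the weight function w on the state space V × {0,1}^{binom(V,2)} by w((u,c)) = q2^{m_c}·q1^{r_c}, where m_c is the number of pairs with status 1 in c and r_c is the number of pairs with status 0 in c. Then the chain satisfies detailed balance with respect to w: for all states x, y, w(x)·P(x,y) = w(y)·P(y,x). Consequently the standard edgelighter walk is reversible with respect to the probability distribution π°((u,c)) ∝ (1/n)·q2^{m_c}·q1^{r_c}, which is therefore its stationary distribution. -/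
open scoped BigOperators
open scoped Classical
open Finset Matrix

/-- Unordered pairs of distinct vertices. -/
abbrev EPair (n : ℕ) := {e : Sym2 (Fin n) // ¬ e.IsDiag}

/-- An on/off configuration on the pairs of distinct vertices. -/
abbrev EConfig (n : ℕ) := EPair n → Bool

/-- State of the standard edgelighter walk: walker position and configuration. -/
abbrev EState (n : ℕ) := Fin n × EConfig n

def mkEPair {n : ℕ} (u v : Fin n) (h : u ≠ v) : EPair n :=
  ⟨s(u, v), by simpa using h⟩

def flipAt {n : ℕ} (c : EConfig n) (e : EPair n) : EConfig n :=
  Function.update c e (! c e)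

/-- One-step transition probabilities of the standard edgelighter walk with
parameters `q1 q2` on `n` vertices. -/
noncomputable def elStep (n : ℕ) (q1 q2 : ℝ) : EState n → EState n → ℝ := fun x y =>
  if hvu : y.1 = x.1 then (if y.2 = x.2 then 1 / (n : ℝ) else 0)
  else
    let e : EPair n := mkEPair x.1 y.1 (Ne.symm hvu)
    let q : ℝ := if x.2 e then q1 else q2
    if y.2 = x.2 then (1 - q) / (n : ℝ)
    else if y.2 = flipAt x.2 e then q / (n : ℝ)
    else 0

/-- `t`-step transition probabilities of a kernel on a finite state space. -/
noncomputable def kPow {S : Type*} [Fintype S] (P : S → S → ℝ) : ℕ → S → S → ℝ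
  | 0 => fun x y => if x = y then 1 else 0
  | (t + 1) => fun x y => ∑ z : S, kPow P t x z * P z y

/-- Total variation distance between two distributions on a finite space. -/
noncomputable def tvDist {S : Type*} [Fintype S] (μ ν : S → ℝ) : ℝ :=
  (∑ x : S, |μ x - ν x|) / 2

def onCount {n : ℕ} (c : EConfig n) : ℕ := (Finset.univ.filter fun e => c e = true).card

def offCount {n : ℕ} (c : EConfig n) : ℕ := (Finset.univ.filter fun e => c e = false).card

noncomputable def elWeight {n : ℕ} (q1 q2 : ℝ) (x : EState n) : ℝ :=
  q2 ^ onCount x.2 * q1 ^ offCount x.2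

/-- The stationary distribution `π°` of the standard edgelighter walk,
`π°((u,c)) ∝ (1/n) q2^{#on(c)} q1^{#off(c)}`. -/
noncomputable def elStat (n : ℕ) (q1 q2 : ℝ) (x : EState n) : ℝ :=
  ((1 / (n : ℝ)) * elWeight q1 q2 x) / ∑ y : EState n, (1 / (n : ℝ)) * elWeight q1 q2 y

/-- Total variation mixing time of the standard edgelighter walk. -/
noncomputable def elMixingTime (n : ℕ) (q1 q2 : ℝ) : ℕ :=
  sInf {t : ℕ | ∀ x : EState n,
    tvDist (kPow (elStep n q1 q2) t x) (elStat n q1 q2) < 1 / 4}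
section Aux
variable {n : ℕ}

lemma flipAt_apply (c : EConfig n) (e : EPair n) : flipAt c e e = !c e := by
  simp [flipAt]

lemma flipAt_flipAt (c : EConfig n) (e : EPair n) : flipAt (flipAt c e) e = c := by
  funext e'
  by_cases h : e' = e
  · subst h; simp [flipAt]
  · simp [flipAt, Function.update_of_ne h]

lemma flipAt_ne (c : EConfig n) (e : EPair n) : flipAt c e ≠ c := by
  intro h
  have := congrFun h e
  simp [flipAt] at this

lemma mkEPair_symm (u v : Fin n) (h : u ≠ v) :
    mkEPair v u h.symm = mkEPair u v h := by
  simp [mkEPair, Sym2.eq_swap]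

lemma count_flip_true (c : EConfig n) (e : EPair n) (he : c e = true) :
    onCount (flipAt c e) + 1 = onCount c ∧ offCount (flipAt c e) = offCount c + 1 := by
  have hupd : flipAt c e = Function.update c e false := by
    simp [flipAt, he]
  constructor
  · have hset : (Finset.univ.filter fun e' => flipAt c e e' = true)
        = (Finset.univ.filter fun e' => c e' = true).erase e := by
      ext e'
      by_cases h : e' = e
      · subst h; simp [hupd]
      · simp [hupd, Function.update_of_ne h, h]
    have hmem : e ∈ Finset.univ.filter fun e' => c e' = true := by simp [he]
    rw [onCount, onCount, hset, Finset.card_erase_add_one hmem]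
  · have hset : (Finset.univ.filter fun e' => flipAt c e e' = false)
        = insert e (Finset.univ.filter fun e' => c e' = false) := by
      ext e'
      by_cases h : e' = e
      · subst h; simp [hupd]
      · simp [hupd, Function.update_of_ne h, h]
    have hmem : e ∉ Finset.univ.filter fun e' => c e' = false := by simp [he]
    rw [offCount, offCount, hset, Finset.card_insert_of_notMem hmem]

lemma weight_flip (q1 q2 : ℝ) (u v : Fin n) (c : EConfig n) (e : EPair n) :
    elWeight q1 q2 (u, c) * (if c e then q1 else q2)
      = elWeight q1 q2 (v, flipAt c e) * (if flipAt c e e then q1 else q2) := by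
  cases he : c e
  · have he' : flipAt c e e = true := by simp [flipAt_apply, he]
    obtain ⟨h1, h2⟩ := count_flip_true (flipAt c e) e he'
    rw [flipAt_flipAt] at h1 h2
    simp only [he, he', elWeight, eq_self_iff_true, if_true, if_neg Bool.false_ne_true]
    rw [h2, ← h1, pow_succ, pow_succ]
    ring
  · have he' : flipAt c e e = false := by simp [flipAt_apply, he]
    obtain ⟨h1, h2⟩ := count_flip_true c e he
    simp only [he, he', elWeight, eq_self_iff_true, if_true, if_neg Bool.false_ne_true]
    rw [h2, ← h1, pow_succ, pow_succ]
    ring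

lemma el_db (q1 q2 : ℝ) (x y : EState n) :
    elWeight q1 q2 x * elStep n q1 q2 x y = elWeight q1 q2 y * elStep n q1 q2 y x := by
  obtain ⟨u, c⟩ := x
  obtain ⟨v, c'⟩ := y
  by_cases h1 : v = u
  · subst h1
    by_cases h2 : c' = c
    · subst h2; rfl
    · simp [elStep, h2, Ne.symm h2]
  · have h1' : ¬ (u = v) := fun h => h1 h.symm
    have hee : mkEPair v u h1 = mkEPair u v (Ne.symm h1) := mkEPair_symm u v (Ne.symm h1)
    set e : EPair n := mkEPair u v (Ne.symm h1) with he
    by_cases h2 : c' = c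
    · subst h2
      have hw : elWeight q1 q2 (u, c') = elWeight q1 q2 (v, c') := rfl
      rw [hw]
      congr 1
      simp [elStep, h1, h1', hee]
      rfl
    · by_cases h3 : c' = flipAt c e
      · subst h3
        have h4 : ¬ (c = flipAt c e) := fun h => flipAt_ne c e h.symm
        have h5 : c = flipAt (flipAt c e) e := (flipAt_flipAt c e).symm
        have hs1 : elStep n q1 q2 (u, c) (v, flipAt c e)
            = (if c e then q1 else q2) / (n : ℝ) := by
          simp [elStep, h1, h2, ← he]
        have hs2 : elStep n q1 q2 (v, flipAt c e) (u, c)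
            = (if flipAt c e e then q1 else q2) / (n : ℝ) := by
          simp [elStep, h1', h4, hee, flipAt_flipAt, ← he]
        rw [hs1, hs2, ← mul_div_assoc, ← mul_div_assoc, weight_flip q1 q2 u v c e]
      · have h2' : ¬ (c = c') := fun h => h2 h.symm
        have h4 : ¬ (c = flipAt c' e) := by
          intro h
          exact h3 (by rw [h, flipAt_flipAt])
        simp [elStep, h1, h1', hee, h2, h3, h2', h4, ← he]

lemma el_row_sum (hn : 1 ≤ n) (q1 q2 : ℝ) (x : EState n) :
    ∑ y : EState n, elStep n q1 q2 x y = 1 := by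
  have hn0 : (n : ℝ) ≠ 0 := by positivity
  rw [Fintype.sum_prod_type]
  have hinner : ∀ v : Fin n, ∑ c' : EConfig n, elStep n q1 q2 x (v, c') = 1 / (n : ℝ) := by
    intro v
    by_cases hv : v = x.1
    · simp only [elStep, dif_pos hv]
      simp
    · set e : EPair n := mkEPair x.1 v (Ne.symm hv) with he
      set q : ℝ := if x.2 e then q1 else q2 with hq
      have hflip : flipAt x.2 e ≠ x.2 := flipAt_ne x.2 e
      have hpt : ∀ c' : EConfig n, elStep n q1 q2 x (v, c')
          = (if c' = x.2 then (1 - q) / (n : ℝ) else 0)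
            + (if c' = flipAt x.2 e then q / (n : ℝ) else 0) := by
        intro c'
        by_cases h2 : c' = x.2
        · subst h2
          simp only [elStep, dif_neg hv, if_pos rfl, if_neg hflip.symm, ← he, ← hq]
          simp
        · by_cases h3 : c' = flipAt x.2 e
          · subst h3
            simp only [elStep, dif_neg hv, if_neg hflip, if_pos rfl, ← he, ← hq]
            simp
          · simp only [elStep, dif_neg hv, if_neg h2, if_neg h3, ← he, ← hq]
            simp
      rw [Finset.sum_congr rfl fun c' _ => hpt c', Finset.sum_add_distrib,
        Finset.sum_ite_eq' Finset.univ x.2, Finset.sum_ite_eq' Finset.univ (flipAt x.2 e)]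
      simp
      ring
  rw [Finset.sum_congr rfl fun v _ => hinner v]
  simp [hn0]

end Aux

/-- The standard edgelighter walk satisfies detailed balance with respect
to the weight `w((u,c)) = q2^{#on(c)} q1^{#off(c)}`; consequently it is reversible with
respect to the probability distribution `π°((u,c)) ∝ (1/n) q2^{#on(c)} q1^{#off(c)}`,
which is therefore its stationary distribution. -/
theorem edgelighter_detailed_balance (n : ℕ) (hn : 1 ≤ n) (q1 q2 : ℝ)
    (hq1 : q1 ∈ Set.Ioo (0 : ℝ) 1) (hq2 : q2 ∈ Set.Ioo (0 : ℝ) 1) :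
    (∀ x y : EState n,
        elWeight q1 q2 x * elStep n q1 q2 x y = elWeight q1 q2 y * elStep n q1 q2 y x) ∧
      (∀ x y : EState n,
        elStat n q1 q2 x * elStep n q1 q2 x y = elStat n q1 q2 y * elStep n q1 q2 y x) ∧
      (∀ y : EState n,
        ∑ x : EState n, elStat n q1 q2 x * elStep n q1 q2 x y = elStat n q1 q2 y) := by
  have hn0 : (0 : ℝ) < (n : ℝ) := by
    exact_mod_cast Nat.lt_of_lt_of_le Nat.zero_lt_one hn
  have hZpos : 0 < ∑ y : EState n, (1 / (n : ℝ)) * elWeight q1 q2 y := by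
    have hne : (Finset.univ : Finset (EState n)).Nonempty := by
      have : Nonempty (Fin n) := ⟨⟨0, Nat.lt_of_lt_of_le Nat.zero_lt_one hn⟩⟩
      exact Finset.univ_nonempty
    refine Finset.sum_pos (fun y _ => ?_) hne
    have hw : 0 < elWeight q1 q2 y := by
      have := hq1.1; have := hq2.1
      unfold elWeight; positivity
    positivity
  have hZ : (∑ y : EState n, (1 / (n : ℝ)) * elWeight q1 q2 y) ≠ 0 := ne_of_gt hZpos
  have hstat_db : ∀ x y : EState n,
      elStat n q1 q2 x * elStep n q1 q2 x y = elStat n q1 q2 y * elStep n q1 q2 y x := by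
    intro x y
    have key : (1 / (n : ℝ) * elWeight q1 q2 x) * elStep n q1 q2 x y
        = (1 / (n : ℝ) * elWeight q1 q2 y) * elStep n q1 q2 y x := by
      rw [mul_assoc, mul_assoc, el_db q1 q2 x y]
    unfold elStat
    rw [div_mul_eq_mul_div (1 / (n : ℝ) * elWeight q1 q2 x) _ (elStep n q1 q2 x y),
        div_mul_eq_mul_div (1 / (n : ℝ) * elWeight q1 q2 y) _ (elStep n q1 q2 y x),
        key]
  refine ⟨el_db q1 q2, hstat_db, fun y => ?_⟩
  calc ∑ x : EState n, elStat n q1 q2 x * elStep n q1 q2 x y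
      = ∑ x : EState n, elStat n q1 q2 y * elStep n q1 q2 y x :=
        Finset.sum_congr rfl fun x _ => hstat_db x y
    _ = elStat n q1 q2 y * ∑ x : EState n, elStep n q1 q2 y x := by
        rw [Finset.mul_sum]
    _ = elStat n q1 q2 y := by rw [el_row_sum hn q1 q2 y, mul_one]
end

section
/- Let n and k be positive integers with 2k+1 ≤ n, and let 𝔫 = ⌊n/(2k+1)⌋. Then there exists a set S of permutations of {1,…,n} with |S| = (2k)^{𝔫} ≥ (2k)^{n/(2k+1) − 1} such that any two distinct elements of S ∪ {identity} disagree in at least 2k+1 positions; that is, for all distinct σ, τ ∈ S ∪ {id}, the number of i ∈ {1,…,n} with σ(i) ≠ τ(i) is at least 2k+1. -/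
open scoped BigOperators
open scoped Classical
open Finset

namespace SepFam

variable (m N n : ℕ)

/-- shift each block `[j*m, (j+1)*m)` cyclically by `a j`, fix everything `≥ N*m`. -/
def ff [NeZero m] (hmn : N * m ≤ n) (a : ℕ → ZMod m) (i : Fin n) : Fin n :=
  if h : (i : ℕ) < N * m then
    ⟨(i : ℕ) / m * m + (((i : ℕ) % m : ZMod m) + a ((i : ℕ) / m)).val, by
      have hm : 0 < m := NeZero.pos m
      have hq : (i : ℕ) / m < N := by
        rw [Nat.div_lt_iff_lt_mul hm]; exact h
      have hv : (((i : ℕ) % m : ZMod m) + a ((i : ℕ) / m)).val < m := ZMod.val_lt _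
      have h1 : ((i : ℕ) / m + 1) * m ≤ N * m := Nat.mul_le_mul_right m hq
      have h2 : ((i : ℕ) / m + 1) * m = (i : ℕ) / m * m + m := by ring
      omega⟩
  else i

variable [NeZero m] (hmn : N * m ≤ n)

lemma ff_coe (a : ℕ → ZMod m) (i : Fin n) (h : (i : ℕ) < N * m) :
    (ff m N n hmn a i : ℕ) =
      (i : ℕ) / m * m + (((i : ℕ) % m : ZMod m) + a ((i : ℕ) / m)).val := by
  simp only [ff, dif_pos h]

lemma ff_coe_not (a : ℕ → ZMod m) (i : Fin n) (h : ¬ (i : ℕ) < N * m) :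
    ff m N n hmn a i = i := by
  simp only [ff, dif_neg h]

lemma ff_lt (a : ℕ → ZMod m) (i : Fin n) (h : (i : ℕ) < N * m) :
    (ff m N n hmn a i : ℕ) < N * m := by
  rw [ff_coe m N n hmn a i h]
  have hm : 0 < m := NeZero.pos m
  have hq : (i : ℕ) / m < N := by rw [Nat.div_lt_iff_lt_mul hm]; exact h
  have hv : (((i : ℕ) % m : ZMod m) + a ((i : ℕ) / m)).val < m := ZMod.val_lt _
  have h1 : ((i : ℕ) / m + 1) * m ≤ N * m := Nat.mul_le_mul_right m hq
  have h2 : ((i : ℕ) / m + 1) * m = (i : ℕ) / m * m + m := by ring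
  omega

lemma ff_ff (a b : ℕ → ZMod m) (i : Fin n) :
    ff m N n hmn a (ff m N n hmn b i) = ff m N n hmn (a + b) i := by
  have hm : 0 < m := NeZero.pos m
  by_cases h : (i : ℕ) < N * m
  · have hin := ff_lt m N n hmn b i h
    apply Fin.ext
    rw [ff_coe m N n hmn a _ hin, ff_coe m N n hmn (a + b) i h]
    have hc := ff_coe m N n hmn b i h
    set q := (i : ℕ) / m with hqdef
    set v := (((i : ℕ) % m : ZMod m) + b q).val with hvdef
    have hv : v < m := ZMod.val_lt _
    have hdiv : (ff m N n hmn b i : ℕ) / m = q := by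
      rw [hc, mul_comm q m, Nat.mul_add_div hm, Nat.div_eq_of_lt hv, add_zero]
    have hmod : (ff m N n hmn b i : ℕ) % m = v := by
      rw [hc, mul_comm q m, Nat.mul_add_mod, Nat.mod_eq_of_lt hv]
    rw [hdiv, hmod]
    congr 1
    congr 1
    have : ((v : ℕ) : ZMod m) = (((i : ℕ) % m : ZMod m) + b q) :=
      ZMod.natCast_rightInverse _
    rw [this]
    simp only [Pi.add_apply]
    ring
  · rw [ff_coe_not m N n hmn b i h, ff_coe_not m N n hmn a i h,
      ff_coe_not m N n hmn (a + b) i h]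

lemma ff_zero (i : Fin n) : ff m N n hmn 0 i = i := by
  by_cases h : (i : ℕ) < N * m
  · apply Fin.ext
    rw [ff_coe m N n hmn 0 i h]
    have hm : 0 < m := NeZero.pos m
    have hr : (i : ℕ) % m < m := Nat.mod_lt _ hm
    simp only [Pi.zero_apply, add_zero]
    rw [ZMod.val_cast_of_lt hr, mul_comm]
    exact Nat.div_add_mod _ _
  · rw [ff_coe_not m N n hmn 0 i h]

/-- the permutation. -/
def pp (a : ℕ → ZMod m) : Equiv.Perm (Fin n) where
  toFun := ff m N n hmn a
  invFun := ff m N n hmn (-a)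
  left_inv := fun i => by rw [ff_ff, neg_add_cancel, ff_zero]
  right_inv := fun i => by rw [ff_ff, add_neg_cancel, ff_zero]

lemma pp_apply (a : ℕ → ZMod m) (i : Fin n) : pp m N n hmn a i = ff m N n hmn a i := rfl

lemma pp_zero : pp m N n hmn 0 = 1 := by
  apply Equiv.ext
  intro i
  rw [pp_apply, ff_zero]; rfl

lemma base_lt {j : ℕ} (hj : j < N) {r : ℕ} (hr : r < m) : j * m + r < N * m := by
  have h1 : (j + 1) * m ≤ N * m := Nat.mul_le_mul_right m hj
  have h2 : (j + 1) * m = j * m + m := by ring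
  omega

lemma ff_base {j : ℕ} (hj : j < N) {r : ℕ} (hr : r < m) (a : ℕ → ZMod m) :
    (ff m N n hmn a ⟨j * m + r, lt_of_lt_of_le (base_lt m N hj hr) hmn⟩ : ℕ) =
      j * m + ((r : ZMod m) + a j).val := by
  have hm : 0 < m := NeZero.pos m
  rw [ff_coe m N n hmn a _ (base_lt m N hj hr)]
  have hdiv : (j * m + r) / m = j := by
    rw [mul_comm j m, Nat.mul_add_div hm, Nat.div_eq_of_lt hr, add_zero]
  have hmod : (j * m + r) % m = r := by
    rw [mul_comm j m, Nat.mul_add_mod, Nat.mod_eq_of_lt hr]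
  simp only [hdiv, hmod]

lemma pp_inj_on {a b : ℕ → ZMod m} (h : pp m N n hmn a = pp m N n hmn b)
    {j : ℕ} (hj : j < N) : a j = b j := by
  have hm : 0 < m := NeZero.pos m
  have h0 : (0 : ℕ) < m := hm
  have := congrArg (fun σ : Equiv.Perm (Fin n) =>
    (σ ⟨j * m + 0, lt_of_lt_of_le (base_lt m N hj h0) hmn⟩ : ℕ)) h
  simp only [pp_apply] at this
  rw [ff_base m N n hmn hj h0 a, ff_base m N n hmn hj h0 b] at this
  have hval : ((0 : ZMod m) + a j).val = ((0 : ZMod m) + b j).val := by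
    push_cast at this ⊢; omega
  have := ZMod.val_injective m hval
  simpa using this

lemma ff_ne {a b : ℕ → ZMod m} {j : ℕ} (hj : j < N) (hab : a j ≠ b j)
    {r : ℕ} (hr : r < m) :
    ff m N n hmn a ⟨j * m + r, lt_of_lt_of_le (base_lt m N hj hr) hmn⟩ ≠
      ff m N n hmn b ⟨j * m + r, lt_of_lt_of_le (base_lt m N hj hr) hmn⟩ := by
  intro hEq
  have := congrArg Fin.val hEq
  rw [ff_base m N n hmn hj hr a, ff_base m N n hmn hj hr b] at this
  have hval : ((r : ZMod m) + a j).val = ((r : ZMod m) + b j).val := by omega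
  have := ZMod.val_injective m hval
  exact hab (by exact add_left_cancel this)

end SepFam


/-- For positive integers `n, k` with `2k+1 ≤ n` and `𝔫 = ⌊n/(2k+1)⌋`,
there is a set `S` of permutations of `{1,…,n}` with `|S| = (2k)^𝔫 ≥ (2k)^{n/(2k+1) - 1}`
such that any two distinct elements of `S ∪ {id}` disagree in at least `2k+1` positions. -/
theorem separated_family_of_permutations (n k : ℕ) (hk : 0 < k) (hkn : 2 * k + 1 ≤ n) :
    ∃ S : Finset (Equiv.Perm (Fin n)),
      S.card = (2 * k) ^ (n / (2 * k + 1)) ∧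
      ((2 * k : ℝ) : ℝ) ^ ((n : ℝ) / (2 * k + 1) - 1) ≤ ((2 * k : ℕ) : ℝ) ^ (n / (2 * k + 1)) ∧
      ∀ σ ∈ insert (1 : Equiv.Perm (Fin n)) S, ∀ τ ∈ insert (1 : Equiv.Perm (Fin n)) S,
        σ ≠ τ → 2 * k + 1 ≤ (Finset.univ.filter fun i => σ i ≠ τ i).card := by
  haveI : NeZero (2 * k + 1) := ⟨by omega⟩
  set m : ℕ := 2 * k + 1 with hmdef
  set N : ℕ := n / m with hNdef
  have hm : 0 < m := by omega
  have hmn : N * m ≤ n := Nat.div_mul_le_self n m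
  have hN1 : 1 ≤ N := (Nat.one_le_div_iff hm).2 hkn
  -- embedding exponents
  set emb : (Fin N → Fin (2 * k)) → (ℕ → ZMod m) :=
    fun e j => if h : j < N then (((e ⟨j, h⟩ : ℕ) + 1 : ℕ) : ZMod m) else 0 with hembdef
  set S : Finset (Equiv.Perm (Fin n)) :=
    Finset.image (fun e => SepFam.pp m N n hmn (emb e)) Finset.univ with hSdef
  refine ⟨S, ?_, ?_, ?_⟩
  · -- cardinality
    rw [hSdef, Finset.card_image_of_injective _ ?_, Finset.card_univ]
    · simp [Fintype.card_fun]
    · intro e e' hee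
      funext j
      have := SepFam.pp_inj_on m N n hmn hee j.2
      rw [hembdef] at this
      simp only [dif_pos j.2] at this
      have h1 : (e ⟨(j : ℕ), j.2⟩ : ℕ) + 1 < m := by have := (e ⟨(j : ℕ), j.2⟩).2; omega
      have h2 : (e' ⟨(j : ℕ), j.2⟩ : ℕ) + 1 < m := by have := (e' ⟨(j : ℕ), j.2⟩).2; omega
      have hv := congrArg ZMod.val this
      rw [ZMod.val_cast_of_lt h1, ZMod.val_cast_of_lt h2] at hv
      have hv' : (e j : ℕ) + 1 = (e' j : ℕ) + 1 := hv
      exact Fin.ext (by omega)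
  · -- real inequality
    have hub : n < (N + 1) * m := by
      have h1 : m * N + n % m = n := Nat.div_add_mod n m
      have h2 : n % m < m := Nat.mod_lt _ hm
      have h3 : (N + 1) * m = m * N + m := by ring
      omega
    have hkR : (1 : ℝ) ≤ (2 * k : ℝ) := by
      have : (1 : ℕ) ≤ 2 * k := by omega
      exact_mod_cast this
    have hexp : (n : ℝ) / (2 * (k : ℝ) + 1) - 1 ≤ (N : ℕ) := by
      have h4 : (n : ℝ) < ((N : ℝ) + 1) * (2 * (k : ℝ) + 1) := by exact_mod_cast hub
      have h5 : (0 : ℝ) < 2 * (k : ℝ) + 1 := by positivity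
      rw [sub_le_iff_le_add, div_le_iff₀ h5]
      nlinarith
    calc ((2 * k : ℝ)) ^ ((n : ℝ) / (2 * (k : ℝ) + 1) - 1)
        ≤ ((2 * k : ℝ)) ^ ((N : ℕ) : ℝ) := Real.rpow_le_rpow_of_exponent_le hkR hexp
      _ = ((2 * k : ℝ)) ^ (N : ℕ) := Real.rpow_natCast _ _
      _ = ((2 * k : ℕ) : ℝ) ^ (N : ℕ) := by push_cast; ring
  · -- separation
    intro σ hσ τ hτ hστ
    have key : ∀ ρ ∈ insert (1 : Equiv.Perm (Fin n)) S,
        ∃ a : ℕ → ZMod m, ρ = SepFam.pp m N n hmn a ∧ ∀ j, ¬ j < N → a j = 0 := by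
      intro ρ hρ
      rcases Finset.mem_insert.1 hρ with h | h
      · exact ⟨0, by rw [h, SepFam.pp_zero], fun _ _ => rfl⟩
      · rw [hSdef] at h
        rcases Finset.mem_image.1 h with ⟨e, _, he⟩
        exact ⟨emb e, he.symm, fun j hj => by rw [hembdef]; simp [dif_neg hj]⟩
    obtain ⟨a, rfl, ha0⟩ := key σ hσ
    obtain ⟨b, rfl, hb0⟩ := key τ hτ
    have hab : ∃ j, j < N ∧ a j ≠ b j := by
      by_contra hcon
      push_neg at hcon
      apply hστ
      congr 1
      funext j
      by_cases hj : j < N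
      · exact hcon j hj
      · rw [ha0 j hj, hb0 j hj]
    obtain ⟨j, hj, habj⟩ := hab
    -- block of positions
    set B : Finset (Fin n) :=
      Finset.image (fun r : Fin m =>
        (⟨j * m + r, lt_of_lt_of_le (SepFam.base_lt m N hj r.2) hmn⟩ : Fin n)) Finset.univ
        with hBdef
    have hBcard : B.card = m := by
      rw [hBdef, Finset.card_image_of_injective, Finset.card_univ, Fintype.card_fin]
      intro r r' hrr
      have := congrArg Fin.val hrr
      simp only at this
      exact Fin.ext (by omega)
    have hBsub : B ⊆ Finset.univ.filter
        (fun i => SepFam.pp m N n hmn a i ≠ SepFam.pp m N n hmn b i) := by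
      intro i hi
      rcases Finset.mem_image.1 hi with ⟨r, _, rfl⟩
      refine Finset.mem_filter.2 ⟨Finset.mem_univ _, ?_⟩
      rw [SepFam.pp_apply, SepFam.pp_apply]
      exact SepFam.ff_ne m N n hmn hj habj r.2
    calc 2 * k + 1 = m := rfl
      _ = B.card := hBcard.symm
      _ ≤ _ := Finset.card_le_card hBsub
end

section
/- Let n and k be positive integers with 2k+1 ≤ n, let p ∈ (0,1), and let A and B be the adjacency matrices of two independent ER(n,p) random graphs on the same vertex set {1,…,n}. Then P[every n×n permutation matrix Q maximizing Tr(A Q B Qᵀ) over all permutation matrices has at most k non-fixed points] ≤ (2k)^{1 − n/(2k+1)}. -/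
open scoped BigOperators
open scoped Classical
open Finset Matrix

/-- Adjacency matrix of a configuration. -/
noncomputable def adjOf {n : ℕ} (c : EConfig n) : Matrix (Fin n) (Fin n) ℝ :=
  Matrix.of fun i j => if h : i = j then 0 else if c (mkEPair i j h) then 1 else 0

/-- Permutation matrix of a permutation. -/
noncomputable def permMat {n : ℕ} (σ : Equiv.Perm (Fin n)) : Matrix (Fin n) (Fin n) ℝ :=
  Matrix.of fun i j => if σ i = j then 1 else 0

/-- Graph matching objective `Tr(A P B Pᵀ)`. -/
noncomputable def gmObj {n : ℕ} (c0 ct : EConfig n) (σ : Equiv.Perm (Fin n)) : ℝ :=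
  Matrix.trace (adjOf c0 * permMat σ * adjOf ct * (permMat σ)ᵀ)

/-- Number of non-fixed points of a permutation. -/
def nonfixed {n : ℕ} (σ : Equiv.Perm (Fin n)) : ℕ :=
  (Finset.univ.filter fun i => σ i ≠ i).card

/-- ER(n,p) probability of a given configuration. -/
noncomputable def erWeight (n : ℕ) (p : ℝ) (c : EConfig n) : ℝ :=
  p ^ onCount c * (1 - p) ^ offCount c

section AuxER

variable {n : ℕ}

/-! ### Objective reformulation -/

lemma gmObj_eq (c1 c2 : EConfig n) (σ : Equiv.Perm (Fin n)) :
    gmObj c1 c2 σ = ∑ i, ∑ a, adjOf c1 i a * adjOf c2 (σ a) (σ i) := by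
  unfold gmObj
  rw [Matrix.trace]
  apply Finset.sum_congr rfl
  intro i _
  rw [Matrix.diag_apply, Matrix.mul_apply]
  have hPt : ∀ j, (permMat σ)ᵀ j i = if σ i = j then (1:ℝ) else 0 := fun _ => rfl
  simp only [hPt, mul_ite, mul_one, mul_zero]
  rw [Finset.sum_ite_eq Finset.univ (σ i)
    (fun j => (adjOf c1 * permMat σ * adjOf c2) i j)]
  simp only [Finset.mem_univ, if_true]
  rw [Matrix.mul_apply]
  simp only [Matrix.mul_apply, Finset.sum_mul]
  rw [Finset.sum_comm]
  apply Finset.sum_congr rfl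
  intro a _
  have hP : ∀ b, permMat σ a b = if σ a = b then (1:ℝ) else 0 := fun _ => rfl
  simp only [hP, mul_ite, mul_one, mul_zero, ite_mul, zero_mul]
  rw [Finset.sum_ite_eq Finset.univ (σ a)
    (fun b => adjOf c1 i a * adjOf c2 b (σ i))]
  simp

/-! ### Relabeling action on configurations -/

def pairPerm (π : Equiv.Perm (Fin n)) : Equiv.Perm (EPair n) where
  toFun e := ⟨e.1.map π, fun h => e.2 ((Sym2.isDiag_map π.injective).mp h)⟩
  invFun e := ⟨e.1.map π.symm, fun h => e.2 ((Sym2.isDiag_map π.symm.injective).mp h)⟩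
  left_inv e := Subtype.ext (by simp [Sym2.map_map])
  right_inv e := Subtype.ext (by simp [Sym2.map_map])

lemma pairPerm_mkEPair (π : Equiv.Perm (Fin n)) {u v : Fin n} (h : u ≠ v) :
    pairPerm π (mkEPair u v h) = mkEPair (π u) (π v) (fun hh => h (π.injective hh)) := by
  apply Subtype.ext
  simp [pairPerm, mkEPair, Sym2.map_pair_eq]

def cmap (π : Equiv.Perm (Fin n)) (c : EConfig n) : EConfig n := fun e => c (pairPerm π e)

lemma adjOf_cmap (π : Equiv.Perm (Fin n)) (c : EConfig n) (i j : Fin n) :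
    adjOf (cmap π c) i j = adjOf c (π i) (π j) := by
  by_cases h : i = j
  · subst h; simp [adjOf]
  · have h' : π i ≠ π j := fun hh => h (π.injective hh)
    simp only [adjOf, Matrix.of_apply, dif_neg h, dif_neg h', cmap, pairPerm_mkEPair]

lemma onCount_cmap (π : Equiv.Perm (Fin n)) (c : EConfig n) :
    onCount (cmap π c) = onCount c := by
  unfold onCount cmap
  exact Finset.card_equiv (pairPerm π) (by simp)

lemma offCount_cmap (π : Equiv.Perm (Fin n)) (c : EConfig n) :
    offCount (cmap π c) = offCount c := by
  unfold offCount cmap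
  exact Finset.card_equiv (pairPerm π) (by simp)

lemma erWeight_cmap (p : ℝ) (π : Equiv.Perm (Fin n)) (c : EConfig n) :
    erWeight n p (cmap π c) = erWeight n p c := by
  unfold erWeight
  rw [onCount_cmap, offCount_cmap]

def cmapEquiv (π : Equiv.Perm (Fin n)) : EConfig n ≃ EConfig n :=
  Equiv.arrowCongr (pairPerm π).symm (Equiv.refl Bool)

lemma cmapEquiv_apply (π : Equiv.Perm (Fin n)) (c : EConfig n) :
    cmapEquiv π c = cmap π c := by
  funext e
  simp [cmapEquiv, cmap, Equiv.arrowCongr]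

lemma gmObj_cmap (π : Equiv.Perm (Fin n)) (c1 c2 : EConfig n) (σ : Equiv.Perm (Fin n)) :
    gmObj c1 (cmap π c2) σ = gmObj c1 c2 (π * σ) := by
  rw [gmObj_eq, gmObj_eq]
  refine Finset.sum_congr rfl fun i _ => Finset.sum_congr rfl fun a _ => ?_
  rw [adjOf_cmap]
  rfl

/-! ### Nonnegativity and normalization of ER weights -/

lemma erWeight_nonneg {p : ℝ} (hp : p ∈ Set.Ioo (0:ℝ) 1) (c : EConfig n) :
    0 ≤ erWeight n p c := by
  unfold erWeight
  have h1 : (0:ℝ) ≤ p := le_of_lt hp.1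
  have h2 : (0:ℝ) ≤ 1 - p := by linarith [hp.2]
  positivity

lemma erWeight_eq_prod (p : ℝ) (c : EConfig n) :
    erWeight n p c = ∏ e : EPair n, (if c e then p else (1 - p)) := by
  unfold erWeight onCount offCount
  rw [Finset.prod_ite]
  simp [Finset.prod_const]

lemma sum_erWeight (p : ℝ) : ∑ c : EConfig n, erWeight n p c = 1 := by
  have := Fintype.prod_sum (ι := EPair n) (κ := fun _ => Bool)
    (fun e b => if b then p else (1 - p)) (R := ℝ)
  simp only [erWeight_eq_prod]
  rw [← this]
  simp

end AuxER

section Code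

/-! ### A large family of pairwise far-apart permutations -/

variable {n k : ℕ}

lemma nonfixed_eq_card_support (σ : Equiv.Perm (Fin n)) :
    nonfixed σ = σ.support.card := by
  unfold nonfixed Equiv.Perm.support
  congr 1

/-- The block-structure equivalence. -/
noncomputable def blockEquiv (n r : ℕ) (h : n / r * r + (n - n / r * r) = n) :
    Fin n ≃ (Fin (n / r) × Fin r) ⊕ Fin (n - n / r * r) :=
  ((finCongr h.symm).trans finSumFinEquiv.symm).trans
    (Equiv.sumCongr finProdFinEquiv.symm (Equiv.refl _))

/-- The code permutation associated to `v`. -/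
noncomputable def codePerm {n r : ℕ} [NeZero r] (h : n / r * r + (n - n / r * r) = n)
    (v : Fin (n / r) → Fin r) : Equiv.Perm (Fin n) :=
  ((blockEquiv n r h).trans
    ((Equiv.sumCongr (Equiv.prodShear (Equiv.refl _) (fun b => Equiv.addRight (v b)))
      (Equiv.refl _)).trans (blockEquiv n r h).symm))

lemma codePerm_apply {n r : ℕ} [NeZero r] (h : n / r * r + (n - n / r * r) = n)
    (v : Fin (n / r) → Fin r) (b : Fin (n / r)) (x : Fin r) :
    codePerm h v ((blockEquiv n r h).symm (Sum.inl (b, x)))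
      = (blockEquiv n r h).symm (Sum.inl (b, x + v b)) := by
  simp [codePerm, Equiv.prodShear]

lemma codePerm_inv_apply {n r : ℕ} [NeZero r] (h : n / r * r + (n - n / r * r) = n)
    (v : Fin (n / r) → Fin r) (b : Fin (n / r)) (x : Fin r) :
    (codePerm h v)⁻¹ ((blockEquiv n r h).symm (Sum.inl (b, x)))
      = (blockEquiv n r h).symm (Sum.inl (b, x - v b)) := by
  have : codePerm h v ((blockEquiv n r h).symm (Sum.inl (b, x - v b)))
      = (blockEquiv n r h).symm (Sum.inl (b, x)) := by
    rw [codePerm_apply]; congr 2; abel_nf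
  calc (codePerm h v)⁻¹ ((blockEquiv n r h).symm (Sum.inl (b, x)))
      = (codePerm h v)⁻¹ (codePerm h v ((blockEquiv n r h).symm (Sum.inl (b, x - v b)))) := by
        rw [this]
    _ = _ := by simp

lemma support_codePerm_large {n r : ℕ} [NeZero r] (h : n / r * r + (n - n / r * r) = n)
    (v w : Fin (n / r) → Fin r) (hvw : v ≠ w) :
    r ≤ ((codePerm h v)⁻¹ * codePerm h w).support.card := by
  obtain ⟨b0, hb0⟩ : ∃ b, v b ≠ w b := by
    by_contra hc
    push_neg at hc
    exact hvw (funext hc)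
  have key : ∀ x : Fin r,
      (blockEquiv n r h).symm (Sum.inl (b0, x))
        ∈ ((codePerm h v)⁻¹ * codePerm h w).support := by
    intro x
    rw [Equiv.Perm.mem_support]
    intro hfix
    rw [Equiv.Perm.mul_apply, codePerm_apply, codePerm_inv_apply] at hfix
    have := ((blockEquiv n r h).symm.injective hfix)
    have h2 : x + w b0 - v b0 = x := by
      have := Sum.inl.inj this
      exact (Prod.ext_iff.mp this).2
    apply hb0
    have h3 : x + (w b0 - v b0) = x + 0 := by
      rw [add_zero, ← add_sub_assoc]; exact h2
    exact (sub_eq_zero.mp (add_left_cancel h3)).symm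
  calc r = (Finset.univ.image fun x : Fin r =>
            (blockEquiv n r h).symm (Sum.inl (b0, x))).card := by
          rw [Finset.card_image_of_injective _
            (fun a b hab => by
              have := (blockEquiv n r h).symm.injective hab
              exact (Prod.ext_iff.mp (Sum.inl.inj this)).2)]
          simp
    _ ≤ _ := Finset.card_le_card (by
          intro y hy
          simp only [Finset.mem_image] at hy
          obtain ⟨x, _, rfl⟩ := hy
          exact key x)

end Code


section Main

variable {n k : ℕ}

/-- The relabeled event: every maximizer `σ` has `π⁻¹σ` with at most `k` non-fixed points. -/
def EvP (k : ℕ) (π : Equiv.Perm (Fin n)) (c1 c2 : EConfig n) : Prop :=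
  ∀ σ : Equiv.Perm (Fin n),
    (∀ σ' : Equiv.Perm (Fin n), gmObj c1 c2 σ' ≤ gmObj c1 c2 σ) → nonfixed (π⁻¹ * σ) ≤ k

lemma evP_cmap (π : Equiv.Perm (Fin n)) (c1 c2 : EConfig n) :
    EvP k 1 c1 (cmap π c2) ↔ EvP k π c1 c2 := by
  constructor
  · intro H σ hmax
    have hmax' : ∀ σ' : Equiv.Perm (Fin n),
        gmObj c1 (cmap π c2) σ' ≤ gmObj c1 (cmap π c2) (π⁻¹ * σ) := by
      intro σ'
      rw [gmObj_cmap, gmObj_cmap, show π * (π⁻¹ * σ) = σ by group]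
      exact hmax (π * σ')
    simpa using H (π⁻¹ * σ) hmax'
  · intro H σ hmax
    have hmax' : ∀ σ' : Equiv.Perm (Fin n), gmObj c1 c2 σ' ≤ gmObj c1 c2 (π * σ) := by
      intro σ'
      have := hmax (π⁻¹ * σ')
      rw [gmObj_cmap, gmObj_cmap, show π * (π⁻¹ * σ') = σ' by group] at this
      exact this
    have := H (π * σ) hmax'
    simpa [show π⁻¹ * (π * σ) = σ by group] using this

lemma evP_disjoint {r : ℕ} [NeZero r] (h : n / r * r + (n - n / r * r) = n)
    (hrk : 2 * k < r) (v w : Fin (n / r) → Fin r) (hvw : v ≠ w) (c1 c2 : EConfig n) :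
    ¬ (EvP k (codePerm h v) c1 c2 ∧ EvP k (codePerm h w) c1 c2) := by
  rintro ⟨H1, H2⟩
  obtain ⟨σ0, -, hmax⟩ := Finset.exists_max_image Finset.univ (gmObj c1 c2)
    ⟨1, Finset.mem_univ 1⟩
  have h1 := H1 σ0 (fun σ' => hmax σ' (Finset.mem_univ _))
  have h2 := H2 σ0 (fun σ' => hmax σ' (Finset.mem_univ _))
  rw [nonfixed_eq_card_support] at h1 h2
  have hdecomp : (codePerm h v)⁻¹ * codePerm h w
      = ((codePerm h v)⁻¹ * σ0) * ((codePerm h w)⁻¹ * σ0)⁻¹ := by group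
  have hle : ((codePerm h v)⁻¹ * codePerm h w).support.card ≤ 2 * k := by
    calc ((codePerm h v)⁻¹ * codePerm h w).support.card
        ≤ (((codePerm h v)⁻¹ * σ0).support ∪ (((codePerm h w)⁻¹ * σ0)⁻¹).support).card := by
          rw [hdecomp]
          exact Finset.card_le_card (Equiv.Perm.support_mul_le _ _)
      _ ≤ (((codePerm h v)⁻¹ * σ0).support).card
            + ((((codePerm h w)⁻¹ * σ0)⁻¹).support).card := Finset.card_union_le _ _
      _ ≤ 2 * k := by rw [Equiv.Perm.support_inv]; omega
  have := support_codePerm_large h v w hvw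
  omega

/-- Probability of the relabeled event. -/
noncomputable def evSum (n k : ℕ) (p : ℝ) (π : Equiv.Perm (Fin n)) : ℝ :=
  ∑ c1 : EConfig n, ∑ c2 : EConfig n,
    if EvP k π c1 c2 then erWeight n p c1 * erWeight n p c2 else 0

lemma evSum_eq (p : ℝ) (π : Equiv.Perm (Fin n)) : evSum n k p π = evSum n k p 1 := by
  unfold evSum
  refine Finset.sum_congr rfl fun c1 _ => ?_
  refine Fintype.sum_equiv (cmapEquiv π)
    (fun c2 => if EvP k π c1 c2 then erWeight n p c1 * erWeight n p c2 else 0)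
    (fun c2 => if EvP k 1 c1 c2 then erWeight n p c1 * erWeight n p c2 else 0)
    (fun c2 => ?_)
  show (if EvP k π c1 c2 then erWeight n p c1 * erWeight n p c2 else 0)
      = (if EvP k 1 c1 (cmapEquiv π c2) then
          erWeight n p c1 * erWeight n p (cmapEquiv π c2) else 0)
  rw [cmapEquiv_apply, erWeight_cmap]
  exact (if_congr (evP_cmap π c1 c2) rfl rfl).symm

lemma evSum_nonneg {p : ℝ} (hp : p ∈ Set.Ioo (0:ℝ) 1) (π : Equiv.Perm (Fin n)) :
    0 ≤ evSum n k p π := by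
  refine Finset.sum_nonneg fun c1 _ => Finset.sum_nonneg fun c2 _ => ?_
  split
  · exact mul_nonneg (erWeight_nonneg hp c1) (erWeight_nonneg hp c2)
  · exact le_rfl

end Main

/-- For two independent `ER(n,p)` graphs `A, B` on the same `n` vertices
and `2k+1 ≤ n`, the probability that every maximizer of `Tr(A Q B Qᵀ)` over permutation
matrices has at most `k` non-fixed points is at most `(2k)^{1 - n/(2k+1)}`. -/
theorem independent_ER_anonymized (n k : ℕ) (hn : 0 < n) (hk : 0 < k)
    (hkn : 2 * k + 1 ≤ n) (p : ℝ) (hp : p ∈ Set.Ioo (0 : ℝ) 1) :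
    (∑ c1 : EConfig n, ∑ c2 : EConfig n,
        if ∀ σ : Equiv.Perm (Fin n),
            (∀ σ' : Equiv.Perm (Fin n), gmObj c1 c2 σ' ≤ gmObj c1 c2 σ) →
            nonfixed σ ≤ k
        then erWeight n p c1 * erWeight n p c2 else 0)
      ≤ (2 * (k : ℝ)) ^ ((1 : ℝ) - (n : ℝ) / (2 * (k : ℝ) + 1)) := by
  have hk1 : (1:ℝ) ≤ (k:ℝ) := by exact_mod_cast hk
  suffices hs : evSum n k p 1 ≤ (2 * (k : ℝ)) ^ ((1 : ℝ) - (n : ℝ) / (2 * (k : ℝ) + 1)) by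
    have : evSum n k p 1
        = ∑ c1 : EConfig n, ∑ c2 : EConfig n,
            if ∀ σ : Equiv.Perm (Fin n),
                (∀ σ' : Equiv.Perm (Fin n), gmObj c1 c2 σ' ≤ gmObj c1 c2 σ) →
                nonfixed σ ≤ k
            then erWeight n p c1 * erWeight n p c2 else 0 := by
      simp only [evSum, EvP, inv_one, one_mul]
    rwa [← this]
  -- setup
  have hrpos : 0 < 2 * k + 1 := by omega
  haveI : NeZero (2 * k + 1) := ⟨by omega⟩
  have hdr : n / (2 * k + 1) * (2 * k + 1) + (n - n / (2 * k + 1) * (2 * k + 1)) = n := by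
    have := Nat.div_mul_le_self n (2 * k + 1); omega
  set r : ℕ := 2 * k + 1 with hr
  set m : ℕ := n / r with hm
  -- per-pair bound
  have hpair : ∀ c1 c2 : EConfig n,
      (∑ v : Fin m → Fin r,
        if EvP k (codePerm hdr v) c1 c2 then erWeight n p c1 * erWeight n p c2 else 0)
      ≤ erWeight n p c1 * erWeight n p c2 := by
    intro c1 c2
    by_cases hex : ∃ v0 : Fin m → Fin r, EvP k (codePerm hdr v0) c1 c2
    · obtain ⟨v0, hv0⟩ := hex
      rw [Finset.sum_eq_single v0]
      · simp [hv0]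
      · intro b _ hb
        have hnb : ¬ EvP k (codePerm hdr b) c1 c2 := fun hEb =>
          evP_disjoint hdr (by omega) b v0 hb c1 c2 ⟨hEb, hv0⟩
        simp [hnb]
      · intro hmem; exact absurd (Finset.mem_univ v0) hmem
    · push_neg at hex
      rw [Finset.sum_eq_zero (fun v _ => by simp [hex v])]
      exact mul_nonneg (erWeight_nonneg hp c1) (erWeight_nonneg hp c2)
  -- total mass is one
  have htot : ∑ c1 : EConfig n, ∑ c2 : EConfig n, erWeight n p c1 * erWeight n p c2 = 1 := by
    calc ∑ c1 : EConfig n, ∑ c2 : EConfig n, erWeight n p c1 * erWeight n p c2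
        = ∑ c1 : EConfig n, erWeight n p c1 * ∑ c2 : EConfig n, erWeight n p c2 :=
          Finset.sum_congr rfl fun c1 _ => (Finset.mul_sum _ _ _).symm
      _ = 1 := by rw [sum_erWeight]; simpa using sum_erWeight (n := n) p
  -- the disjointness bound
  have hsum : ∑ _v : Fin m → Fin r, evSum n k p 1 ≤ 1 := by
    have h1 : ∀ v : Fin m → Fin r, evSum n k p 1 = evSum n k p (codePerm hdr v) :=
      fun v => (evSum_eq p _).symm
    calc ∑ _v : Fin m → Fin r, evSum n k p 1
        = ∑ v : Fin m → Fin r, evSum n k p (codePerm hdr v) :=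
          Finset.sum_congr rfl fun v _ => h1 v
      _ = ∑ c1 : EConfig n, ∑ c2 : EConfig n, ∑ v : Fin m → Fin r,
            (if EvP k (codePerm hdr v) c1 c2
              then erWeight n p c1 * erWeight n p c2 else 0) := by
          unfold evSum
          rw [Finset.sum_comm]
          exact Finset.sum_congr rfl fun c1 _ => Finset.sum_comm
      _ ≤ ∑ c1 : EConfig n, ∑ c2 : EConfig n, erWeight n p c1 * erWeight n p c2 :=
          Finset.sum_le_sum fun c1 _ => Finset.sum_le_sum fun c2 _ => hpair c1 c2
      _ = 1 := htot
  have hcard : ((r:ℝ) ^ m) * evSum n k p 1 ≤ 1 := by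
    have : ∑ _v : Fin m → Fin r, evSum n k p 1
        = ((Fintype.card (Fin m → Fin r) : ℝ)) * evSum n k p 1 := by
      rw [Finset.sum_const, nsmul_eq_mul]
      simp
    rw [this, Fintype.card_fun] at hsum
    simpa using hsum
  -- conclude
  have hpow_pos : (0:ℝ) < (r:ℝ) ^ m := by positivity
  have hF1le : evSum n k p 1 ≤ ((r:ℝ) ^ m)⁻¹ := by
    have h2 : ((r:ℝ) ^ m)⁻¹ * (((r:ℝ) ^ m) * evSum n k p 1) ≤ ((r:ℝ) ^ m)⁻¹ * 1 :=
      mul_le_mul_of_nonneg_left hcard (by positivity)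
    rwa [← mul_assoc, inv_mul_cancel₀ (ne_of_gt hpow_pos), one_mul, mul_one] at h2
  have hbase : (1:ℝ) ≤ 2 * (k:ℝ) := by linarith
  have hnlt : (n:ℝ) < ((m:ℝ) + 1) * (2 * (k:ℝ) + 1) := by
    have h2 := Nat.div_add_mod n r
    have h3 : n % r < r := Nat.mod_lt _ hrpos
    have h4 : n < (m + 1) * r := by
      calc n = r * m + n % r := by rw [hm]; omega
        _ < r * m + r := by omega
        _ = (m + 1) * r := by ring
    have h5 : (n:ℝ) < ((m:ℝ) + 1) * (r:ℝ) := by exact_mod_cast h4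
    have h6 : (r:ℝ) = 2 * (k:ℝ) + 1 := by rw [hr]; push_cast; ring
    rwa [h6] at h5
  have hexp : (n:ℝ) / (2 * (k:ℝ) + 1) - 1 ≤ (m:ℝ) := by
    have hpos : (0:ℝ) < 2 * (k:ℝ) + 1 := by linarith
    have := (div_lt_iff₀ hpos).mpr hnlt
    linarith
  calc evSum n k p 1 ≤ ((r:ℝ) ^ m)⁻¹ := hF1le
    _ ≤ ((2 * (k:ℝ)) ^ ((n:ℝ) / (2 * (k:ℝ) + 1) - 1))⁻¹ := by
        apply inv_anti₀ (Real.rpow_pos_of_pos (by linarith) _)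
        calc (2 * (k:ℝ)) ^ ((n:ℝ) / (2 * (k:ℝ) + 1) - 1)
            ≤ (2 * (k:ℝ)) ^ ((m:ℕ):ℝ) := Real.rpow_le_rpow_of_exponent_le hbase hexp
          _ = (2 * (k:ℝ)) ^ m := Real.rpow_natCast _ m
          _ ≤ (r:ℝ) ^ m := by
              apply pow_le_pow_left₀ (by linarith)
              rw [hr]; push_cast; linarith
    _ = (2 * (k:ℝ)) ^ ((1:ℝ) - (n:ℝ) / (2 * (k:ℝ) + 1)) := by
        rw [show ((1:ℝ) - (n:ℝ) / (2 * (k:ℝ) + 1))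
            = -((n:ℝ) / (2 * (k:ℝ) + 1) - 1) by ring,
          Real.rpow_neg (by linarith)]
end

section
/- Let p ∈ (0,1), let G_0 ∼ ER(n,p), and run the standard edgelighter walk with parameters q1 = 1−p and q2 = p, initial configuration given by the edge set of G_0, and initial walker position uniform on the vertices and independent of G_0. Let A_0 and A_t be the adjacency matrices of G_0 and of the graph after t steps. Then for every pair {u,v} of distinct vertices, Corr(A_{0,u,v}, A_{t,u,v}) = 𝔭_{t,u,v}, where 𝔭_{t,u,v} = P({u,v} ≠ {L_s, L_{s+1}} for all 0 ≤ s ≤ t−1) is the probability that the pair {u,v} has not been traversed by the walker by time t. -/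
open scoped BigOperators
open scoped Classical
open Finset Matrix

/-- Joint probability that the initial configuration (drawn from ER(n,p)) is `c0` and the
configuration after `t` steps of the standard edgelighter walk (with the initial walker
position uniform on the vertices, independent of the graph) is `ct`. -/
noncomputable def elJoint (n : ℕ) (p q1 q2 : ℝ) (t : ℕ) (c0 ct : EConfig n) : ℝ :=
  erWeight n p c0 *
    ∑ u : Fin n, (1 / (n : ℝ)) *
      ∑ v : Fin n, kPow (elStep n q1 q2) t (u, c0) (v, ct)

/-- Expectation of a function of the initial configuration and the configuration at
time `t`, under the joint law of the ER(n,p) graph and the edgelighter walk. -/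
noncomputable def jointExp (n : ℕ) (p q1 q2 : ℝ) (t : ℕ)
    (f : EConfig n → EConfig n → ℝ) : ℝ :=
  ∑ c0 : EConfig n, ∑ ct : EConfig n, elJoint n p q1 q2 t c0 ct * f c0 ct


/-! ### Auxiliary lemmas -/

section AuxWalk

lemma walkSeq_zero {n t : ℕ} (l0 : Fin n) (f : Fin t → Fin n) : walkSeq t l0 f 0 = l0 := by
  simp [walkSeq]

lemma walkSeq_shift {n t : ℕ} (l0 : Fin n) (f : Fin (t+1) → Fin n) {ℓ : ℕ} (hℓ : ℓ ≤ t) :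
    walkSeq (t+1) l0 f (ℓ+1) = walkSeq t (f 0) (fun i => f i.succ) ℓ := by
  rcases Nat.eq_zero_or_pos ℓ with h | h
  · subst h
    simp only [walkSeq]
    rw [dif_pos ⟨Nat.zero_lt_one, by omega⟩, dif_neg (by omega)]
    congr 1
  · simp only [walkSeq]
    rw [dif_pos ⟨by omega, by omega⟩, dif_pos ⟨h, hℓ⟩]
    show f _ = f (Fin.succ _)
    congr 1
    rw [Fin.succ_mk]
    apply Fin.ext
    simp
    omega

/-- path-avoidance count -/
def cnt (n : ℕ) (u v : Fin n) (t : ℕ) (l0 : Fin n) : ℕ :=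
  (Finset.univ.filter fun f : Fin t → Fin n =>
    ∀ ℓ < t, s(walkSeq t l0 f ℓ, walkSeq t l0 f (ℓ + 1)) ≠ s(u, v)).card

lemma cnt_zero {n : ℕ} (u v : Fin n) (l0 : Fin n) : cnt n u v 0 l0 = 1 := by
  simp [cnt]

lemma avoid_succ_iff {n t : ℕ} (u v l0 : Fin n) (f : Fin (t+1) → Fin n) :
    (∀ ℓ < t+1, s(walkSeq (t+1) l0 f ℓ, walkSeq (t+1) l0 f (ℓ + 1)) ≠ s(u, v)) ↔
      (s(l0, f 0) ≠ s(u, v) ∧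
        ∀ ℓ < t, s(walkSeq t (f 0) (fun i => f i.succ) ℓ,
          walkSeq t (f 0) (fun i => f i.succ) (ℓ + 1)) ≠ s(u, v)) := by
  constructor
  · intro h
    refine ⟨?_, ?_⟩
    · have := h 0 (by omega)
      rwa [walkSeq_zero, walkSeq_shift l0 f (Nat.zero_le t), walkSeq_zero] at this
    · intro ℓ hℓ
      have := h (ℓ+1) (by omega)
      rwa [walkSeq_shift l0 f (by omega), walkSeq_shift l0 f (by omega)] at this
  · rintro ⟨h0, h⟩ ℓ hℓ
    rcases Nat.eq_zero_or_pos ℓ with rfl | hpos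
    · rwa [walkSeq_zero, walkSeq_shift l0 f (Nat.zero_le t), walkSeq_zero]
    · obtain ⟨m, rfl⟩ : ∃ m, ℓ = m + 1 := ⟨ℓ - 1, by omega⟩
      rw [walkSeq_shift l0 f (by omega), walkSeq_shift l0 f (by omega)]
      exact h m (by omega)

lemma cnt_succ {n : ℕ} (u v : Fin n) (t : ℕ) (l0 : Fin n) :
    cnt n u v (t+1) l0 =
      ∑ w : Fin n, if s(l0, w) = s(u, v) then 0 else cnt n u v t w := by
  classical
  rw [cnt, Finset.card_filter]
  rw [← Equiv.sum_comp (Fin.consEquiv (fun _ : Fin (t+1) => Fin n))]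
  rw [Fintype.sum_prod_type]
  refine Finset.sum_congr rfl fun w _ => ?_
  rw [cnt, Finset.card_filter]
  by_cases hw : s(l0, w) = s(u, v)
  · rw [if_pos hw]
    refine Finset.sum_eq_zero fun g _ => ?_
    rw [if_neg]
    intro hP
    rw [avoid_succ_iff] at hP
    exact hP.1 (by simpa using hw)
  · rw [if_neg hw]
    refine Finset.sum_congr rfl fun g _ => ?_
    congr 1
    rw [eq_iff_iff, avoid_succ_iff]
    simp only [Fin.consEquiv_apply, Fin.cons_zero, Fin.cons_succ]
    constructor
    · rintro ⟨-, h⟩; exact h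
    · intro h; exact ⟨by simpa using hw, h⟩

noncomputable def surv (n : ℕ) (e : Sym2 (Fin n)) : ℕ → Fin n → ℝ
  | 0 => fun _ => 1
  | (t+1) => fun w => (1/(n:ℝ)) * ∑ w' : Fin n, if s(w, w') = e then 0 else surv n e t w'

lemma surv_eq_cnt {n : ℕ} (hn : 0 < n) (u v : Fin n) (t : ℕ) (l0 : Fin n) :
    surv n s(u,v) t l0 = (cnt n u v t l0 : ℝ) / (n : ℝ) ^ t := by
  induction t generalizing l0 with
  | zero => simp [surv, cnt_zero]
  | succ t ih =>
    have hn' : (n : ℝ) ≠ 0 := Nat.cast_ne_zero.2 hn.ne'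
    rw [surv, cnt_succ]
    push_cast
    rw [Finset.sum_div]
    rw [Finset.mul_sum]
    refine Finset.sum_congr rfl fun w _ => ?_
    by_cases hw : s(l0, w) = s(u, v)
    · simp [hw]
    · rw [if_neg hw, if_neg hw, ih w]
      rw [pow_succ]
      ring

lemma travProb_eq_surv {n : ℕ} (hn : 0 < n) (t : ℕ) (u v : Fin n) :
    travProb n t u v = (1/(n:ℝ)) * ∑ l0 : Fin n, surv n s(u,v) t l0 := by
  have hn' : (n : ℝ) ≠ 0 := Nat.cast_ne_zero.2 hn.ne'
  have hcard : (Finset.univ.filter fun g : Fin n × (Fin t → Fin n) =>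
      ∀ ℓ < t, s(walkSeq t g.1 g.2 ℓ, walkSeq t g.1 g.2 (ℓ + 1)) ≠ s(u, v)).card
      = ∑ l0 : Fin n, cnt n u v t l0 := by
    rw [Finset.card_filter, Fintype.sum_prod_type]
    refine Finset.sum_congr rfl fun l0 _ => ?_
    rw [cnt, Finset.card_filter]
  rw [travProb, hcard]
  push_cast
  rw [Finset.mul_sum, Finset.sum_div]
  refine Finset.sum_congr rfl fun l0 _ => ?_
  rw [surv_eq_cnt hn]
  rw [pow_succ]
  ring

lemma kPow_succ_left {S : Type*} [Fintype S] (P : S → S → ℝ) (t : ℕ) (x y : S) :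
    kPow P (t+1) x y = ∑ z : S, P x z * kPow P t z y := by
  induction t generalizing y with
  | zero =>
    have h1 : kPow P 1 x y = P x y := by
      show ∑ z : S, (if x = z then (1:ℝ) else 0) * P z y = P x y
      rw [Finset.sum_congr rfl (fun z _ => by
        rw [show (if x = z then (1:ℝ) else 0) * P z y = if z = x then P z y else 0 by
          by_cases h : x = z <;> simp [h, eq_comm]])]
      rw [Finset.sum_ite_eq' Finset.univ x (fun z => P z y)]
      simp
    have h2 : ∑ z : S, P x z * kPow P 0 z y = P x y := by
      show ∑ z : S, P x z * (if z = y then (1:ℝ) else 0) = P x y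
      rw [Finset.sum_congr rfl (fun z _ => by
        rw [show P x z * (if z = y then (1:ℝ) else 0) = if z = y then P x z else 0 by
          by_cases h : z = y <;> simp [h]])]
      rw [Finset.sum_ite_eq' Finset.univ y (fun z => P x z)]
      simp
    rw [h1, h2]
  | succ t ih =>
    show ∑ z : S, kPow P (t+1) x z * P z y = _
    calc ∑ z : S, kPow P (t+1) x z * P z y
        = ∑ z : S, ∑ w : S, (P x w * kPow P t w z) * P z y := by
          refine Finset.sum_congr rfl fun z _ => ?_
          rw [ih, Finset.sum_mul]
      _ = ∑ w : S, ∑ z : S, (P x w * kPow P t w z) * P z y := Finset.sum_comm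
      _ = ∑ w : S, P x w * ∑ z : S, kPow P t w z * P z y := by
          refine Finset.sum_congr rfl fun w _ => ?_
          rw [Finset.mul_sum]
          refine Finset.sum_congr rfl fun z _ => by ring
      _ = ∑ w : S, P x w * kPow P (t+1) w y := rfl

/-- One-step integration against the edgelighter kernel. -/
lemma elStep_sum (n : ℕ) (q1 q2 : ℝ) (x : EState n) (g : EState n → ℝ) :
    ∑ z : EState n, elStep n q1 q2 x z * g z
      = ∑ w : Fin n, (if h : w = x.1 then (1/(n:ℝ)) * g x
          else
            ((1 - (if x.2 (mkEPair x.1 w (Ne.symm h)) then q1 else q2))/(n:ℝ))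
                * g (w, x.2)
              + ((if x.2 (mkEPair x.1 w (Ne.symm h)) then q1 else q2)/(n:ℝ))
                * g (w, flipAt x.2 (mkEPair x.1 w (Ne.symm h)))) := by
  rw [Fintype.sum_prod_type]
  refine Finset.sum_congr rfl fun w _ => ?_
  by_cases h : w = x.1
  · rw [dif_pos h]
    have key : ∀ c : EConfig n, elStep n q1 q2 x (w, c) * g (w, c)
        = if c = x.2 then (1/(n:ℝ)) * g x else 0 := by
      intro c
      by_cases hc : c = x.2
      · subst hc; subst h
        simp [elStep]
      · simp [elStep, h, hc]
    rw [Finset.sum_congr rfl fun c _ => key c]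
    rw [Finset.sum_ite_eq' Finset.univ x.2 (fun _ => (1/(n:ℝ)) * g x)]
    simp
  · rw [dif_neg h]
    set e := mkEPair x.1 w (Ne.symm h) with he
    set q : ℝ := if x.2 e then q1 else q2 with hq
    have hflip : flipAt x.2 e ≠ x.2 := by
      intro hcontra
      have := congrFun hcontra e
      simp [flipAt] at this
    have hstep : ∀ c : EConfig n, elStep n q1 q2 x (w, c)
        = if c = x.2 then (1-q)/(n:ℝ) else if c = flipAt x.2 e then q/(n:ℝ) else 0 := by
      intro c
      show (if hvu : (w, c).1 = x.1 then _ else _) = _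
      rw [dif_neg (by exact h)]
    have key : ∀ c : EConfig n, elStep n q1 q2 x (w, c) * g (w, c)
        = (if c = x.2 then ((1-q)/(n:ℝ)) * g (w, x.2) else 0)
          + (if c = flipAt x.2 e then (q/(n:ℝ)) * g (w, flipAt x.2 e) else 0) := by
      intro c
      rw [hstep c]
      by_cases hc : c = x.2
      · subst hc
        rw [if_pos rfl, if_pos rfl, if_neg (fun hx => hflip hx.symm)]
        ring
      · by_cases hc2 : c = flipAt x.2 e
        · subst hc2
          rw [if_neg hc, if_neg hc, if_pos rfl, if_pos rfl]
          ring
        · rw [if_neg hc, if_neg hc, if_neg hc2, if_neg hc2]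
          ring
    rw [Finset.sum_congr rfl fun c _ => key c]
    rw [Finset.sum_add_distrib]
    rw [Finset.sum_ite_eq' Finset.univ x.2 (fun _ => ((1-q)/(n:ℝ)) * g (w, x.2))]
    rw [Finset.sum_ite_eq' Finset.univ (flipAt x.2 e) (fun _ => (q/(n:ℝ)) * g (w, flipAt x.2 e))]
    simp

lemma sAA_ne {n : ℕ} (a u v : Fin n) (huv : u ≠ v) : s(a, a) ≠ s(u, v) := by
  intro hc
  rw [Sym2.eq_iff] at hc
  rcases hc with ⟨rfl, rfl⟩ | ⟨rfl, rfl⟩ <;> exact huv rfl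

lemma phi_eq {n : ℕ} (hn : 0 < n) (p : ℝ) (u v : Fin n) (huv : u ≠ v) (t : ℕ)
    (x : EState n) :
    ∑ y : EState n, kPow (elStep n (1-p) p) t x y *
        (if y.2 (mkEPair u v huv) then (1:ℝ) else 0)
      = surv n s(u,v) t x.1 * (if x.2 (mkEPair u v huv) then (1:ℝ) else 0)
        + (1 - surv n s(u,v) t x.1) * p := by
  have hn' : (n : ℝ) ≠ 0 := Nat.cast_ne_zero.2 hn.ne'
  induction t generalizing x with
  | zero =>
    simp only [kPow, surv, ite_mul, one_mul, zero_mul]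
    rw [Finset.sum_ite_eq]
    simp
  | succ t ih =>
    set eP := mkEPair u v huv with heP
    calc ∑ y : EState n, kPow (elStep n (1-p) p) (t+1) x y *
          (if y.2 eP then (1:ℝ) else 0)
        = ∑ y : EState n, ∑ z : EState n, (elStep n (1-p) p x z * kPow (elStep n (1-p) p) t z y)
            * (if y.2 eP then (1:ℝ) else 0) := by
          refine Finset.sum_congr rfl fun y _ => ?_
          rw [kPow_succ_left, Finset.sum_mul]
      _ = ∑ z : EState n, elStep n (1-p) p x z *
            ∑ y : EState n, kPow (elStep n (1-p) p) t z y * (if y.2 eP then (1:ℝ) else 0) := by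
          rw [Finset.sum_comm]
          refine Finset.sum_congr rfl fun z _ => ?_
          rw [Finset.mul_sum]
          exact Finset.sum_congr rfl fun y _ => by ring
      _ = ∑ z : EState n, elStep n (1-p) p x z *
            (surv n s(u,v) t z.1 * (if z.2 eP then (1:ℝ) else 0)
              + (1 - surv n s(u,v) t z.1) * p) := by
          exact Finset.sum_congr rfl fun z _ => by rw [ih]
      _ = ∑ w : Fin n, (1/(n:ℝ)) *
            ((if s(x.1, w) = s(u,v) then 0 else surv n s(u,v) t w)
                * (if x.2 eP then (1:ℝ) else 0)
              + (1 - (if s(x.1, w) = s(u,v) then 0 else surv n s(u,v) t w)) * p) := by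
          rw [elStep_sum n (1-p) p x
            (fun z => surv n s(u,v) t z.1 * (if z.2 eP then (1:ℝ) else 0)
              + (1 - surv n s(u,v) t z.1) * p)]
          refine Finset.sum_congr rfl fun w _ => ?_
          by_cases h : w = x.1
          · rw [dif_pos h]
            subst h
            rw [if_neg (sAA_ne x.1 u v huv)]
            try ring
          · rw [dif_neg h]
            set e' := mkEPair x.1 w (Ne.symm h) with he'
            by_cases hcase : s(x.1, w) = s(u, v)
            · have hee : e' = eP := Subtype.ext hcase
              rw [if_pos hcase, hee]
              cases hb : x.2 eP <;>
                simp [flipAt, hb] <;>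
                try ring
            · have hee : e' ≠ eP := fun hc => hcase (congrArg Subtype.val hc)
              rw [if_neg hcase]
              have hflip : (flipAt x.2 e') eP = x.2 eP := by
                simp [flipAt, Function.update_of_ne (Ne.symm hee)]
              dsimp only
              simp only [hflip]
              ring
      _ = surv n s(u,v) (t+1) x.1 * (if x.2 eP then (1:ℝ) else 0)
            + (1 - surv n s(u,v) (t+1) x.1) * p := by
          have hsurv : surv n s(u,v) (t+1) x.1
              = (1/(n:ℝ)) * ∑ w : Fin n,
                  (if s(x.1, w) = s(u,v) then 0 else surv n s(u,v) t w) := rfl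
          set A := (if x.2 eP then (1:ℝ) else 0)
          set σ : Fin n → ℝ := fun w => if s(x.1, w) = s(u,v) then 0 else surv n s(u,v) t w
            with hσ
          have expand : ∀ w : Fin n, (1/(n:ℝ)) * (σ w * A + (1 - σ w) * p)
              = (1/(n:ℝ)) * A * σ w + ((1/(n:ℝ)) * p - (1/(n:ℝ)) * p * σ w) := by
            intro w; ring
          rw [Finset.sum_congr rfl fun w _ => expand w]
          rw [Finset.sum_add_distrib, ← Finset.mul_sum, Finset.sum_sub_distrib,
            Finset.sum_const, ← Finset.mul_sum]
          rw [hsurv]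
          simp only [Finset.card_univ, Fintype.card_fin, nsmul_eq_mul]
          field_simp

lemma elStep_rowsum {n : ℕ} (hn : 0 < n) (q1 q2 : ℝ) (x : EState n) :
    ∑ z : EState n, elStep n q1 q2 x z = 1 := by
  have hn' : (n : ℝ) ≠ 0 := Nat.cast_ne_zero.2 hn.ne'
  have h := elStep_sum n q1 q2 x (fun _ => (1:ℝ))
  simp only [mul_one] at h
  rw [h]
  rw [Finset.sum_congr rfl (fun w _ => show _ = (1:ℝ)/(n:ℝ) from by
    by_cases hw : w = x.1
    · rw [dif_pos hw]
    · rw [dif_neg hw]; ring)]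
  rw [Finset.sum_const, Finset.card_univ, Fintype.card_fin, nsmul_eq_mul]
  field_simp

lemma kPow_rowsum {n : ℕ} (hn : 0 < n) (q1 q2 : ℝ) (t : ℕ) (x : EState n) :
    ∑ y : EState n, kPow (elStep n q1 q2) t x y = 1 := by
  induction t generalizing x with
  | zero =>
    simp only [kPow]
    refine (Finset.sum_eq_single x ?_ ?_).trans ?_
    · intro b _ hb
      exact if_neg (fun h => hb h.symm)
    · intro h
      exact absurd (Finset.mem_univ x) h
    · simp
  | succ t ih =>
    show ∑ y : EState n, ∑ z : EState n, kPow (elStep n q1 q2) t x z * elStep n q1 q2 z y = 1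
    rw [Finset.sum_comm]
    calc ∑ z : EState n, ∑ y : EState n, kPow (elStep n q1 q2) t x z * elStep n q1 q2 z y
        = ∑ z : EState n, kPow (elStep n q1 q2) t x z := by
          refine Finset.sum_congr rfl fun z _ => ?_
          rw [← Finset.mul_sum, elStep_rowsum hn, mul_one]
      _ = 1 := ih x

lemma erWeight_prod {n : ℕ} (p : ℝ) (c : EConfig n) :
    erWeight n p c = ∏ e : EPair n, (if c e then p else 1 - p) := by
  rw [Finset.prod_ite (fun _ => p) (fun _ => 1 - p), Finset.prod_const, Finset.prod_const]
  rw [erWeight, onCount, offCount]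
  have hoff : (Finset.univ.filter fun e : EPair n => c e = false)
      = (Finset.univ.filter fun e : EPair n => ¬ c e = true) := by
    ext e
    simp
  rw [hoff]

lemma sum_prod_bool {n : ℕ} (w : EPair n → Bool → ℝ) :
    ∑ c : EConfig n, ∏ e : EPair n, w e (c e) = ∏ e : EPair n, (w e true + w e false) := by
  classical
  rw [show (Finset.univ : Finset (EConfig n)) = Fintype.piFinset (fun _ => Finset.univ) from
    (Fintype.piFinset_univ).symm]
  rw [← Finset.prod_univ_sum]
  refine Finset.prod_congr rfl fun e _ => ?_
  simp

lemma sum_erWeight_mul {n : ℕ} (p : ℝ) (eP : EPair n) (g : Bool → ℝ) :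
    ∑ c : EConfig n, erWeight n p c * g (c eP) = p * g true + (1 - p) * g false := by
  classical
  have key : ∀ c : EConfig n, erWeight n p c * g (c eP)
      = ∏ e : EPair n, ((if c e then p else 1 - p) * (if e = eP then g (c e) else 1)) := by
    intro c
    rw [Finset.prod_mul_distrib, ← erWeight_prod]
    congr 1
    rw [Finset.prod_ite_eq' Finset.univ eP (fun e => g (c e))]
    simp
  rw [Finset.sum_congr rfl fun c _ => key c]
  rw [sum_prod_bool (fun e b => (if b then p else 1 - p) * (if e = eP then g b else 1))]
  have hpt : ∀ e : EPair n, ((if (true : Bool) then p else 1 - p) * (if e = eP then g true else 1)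
        + (if (false : Bool) then p else 1 - p) * (if e = eP then g false else 1))
      = if e = eP then (p * g true + (1 - p) * g false) else 1 := by
    intro e
    by_cases he : e = eP <;> simp [he] <;> ring
  rw [Finset.prod_congr rfl fun e _ => hpt e]
  rw [Finset.prod_ite_eq' Finset.univ eP (fun _ => p * g true + (1 - p) * g false)]
  simp

/-- Factorisation of `jointExp` for product functions. -/
lemma jointExp_eq {n : ℕ} (p : ℝ) (t : ℕ) (a h : EConfig n → ℝ) :
    jointExp n p (1-p) p t (fun c0 ct => a c0 * h ct)
      = ∑ c0 : EConfig n, erWeight n p c0 * a c0 *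
          ((1/(n:ℝ)) * ∑ u' : Fin n, ∑ y : EState n,
            kPow (elStep n (1-p) p) t (u', c0) y * h y.2) := by
  rw [jointExp]
  refine Finset.sum_congr rfl fun c0 _ => ?_
  calc ∑ ct : EConfig n, elJoint n p (1-p) p t c0 ct * (a c0 * h ct)
      = ∑ ct : EConfig n, ∑ u' : Fin n, (erWeight n p c0 * a c0) *
          ((1/(n:ℝ)) * ((∑ v' : Fin n, kPow (elStep n (1-p) p) t (u', c0) (v', ct)) * h ct)) := by
        refine Finset.sum_congr rfl fun ct _ => ?_
        rw [elJoint, Finset.mul_sum, Finset.sum_mul]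
        refine Finset.sum_congr rfl fun u' _ => by ring
    _ = ∑ u' : Fin n, ∑ ct : EConfig n, (erWeight n p c0 * a c0) *
          ((1/(n:ℝ)) * ((∑ v' : Fin n, kPow (elStep n (1-p) p) t (u', c0) (v', ct)) * h ct)) :=
        Finset.sum_comm
    _ = erWeight n p c0 * a c0 *
          ((1/(n:ℝ)) * ∑ u' : Fin n, ∑ y : EState n,
            kPow (elStep n (1-p) p) t (u', c0) y * h y.2) := by
        rw [Finset.mul_sum, Finset.mul_sum]
        refine Finset.sum_congr rfl fun u' _ => ?_
        rw [← Finset.mul_sum, ← Finset.mul_sum]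
        congr 2
        rw [Fintype.sum_prod_type, Finset.sum_comm]
        refine Finset.sum_congr rfl fun ct _ => ?_
        rw [Finset.sum_mul]

end AuxWalk

/-- For `G₀ ∼ ER(n,p)` and the standard edgelighter walk with
`q1 = 1-p`, `q2 = p`, the Pearson correlation of the indicators of the pair `{u,v}` in
`A₀` and in `A_t` equals `𝔭_{t,u,v}`, the probability that the pair has not been
traversed by time `t`. -/
theorem edgelighter_edge_correlation (n : ℕ) (hn : 2 ≤ n)
    (p : ℝ) (hp : p ∈ Set.Ioo (0 : ℝ) 1) (t : ℕ) (ht : 1 ≤ t)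
    (u v : Fin n) (huv : u ≠ v) :
    (jointExp n p (1 - p) p t
        (fun c0 ct => (if c0 (mkEPair u v huv) then 1 else 0) *
          (if ct (mkEPair u v huv) then 1 else 0)) -
      jointExp n p (1 - p) p t (fun c0 _ => if c0 (mkEPair u v huv) then 1 else 0) *
        jointExp n p (1 - p) p t (fun _ ct => if ct (mkEPair u v huv) then 1 else 0)) /
    (Real.sqrt
        (jointExp n p (1 - p) p t
            (fun c0 _ => (if c0 (mkEPair u v huv) then 1 else 0) ^ 2) -
          (jointExp n p (1 - p) p t (fun c0 _ => if c0 (mkEPair u v huv) then 1 else 0)) ^ 2) *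
      Real.sqrt
        (jointExp n p (1 - p) p t
            (fun _ ct => (if ct (mkEPair u v huv) then 1 else 0) ^ 2) -
          (jointExp n p (1 - p) p t (fun _ ct => if ct (mkEPair u v huv) then 1 else 0)) ^ 2))
      = travProb n t u v := by
  classical
  obtain ⟨hp0, hp1⟩ := hp
  have hn0 : 0 < n := by omega
  have hn' : (n : ℝ) ≠ 0 := Nat.cast_ne_zero.2 hn0.ne'
  set eP := mkEPair u v huv with heP
  set 𝔭 := travProb n t u v with hT
  -- midpoint computation
  have hmid : ∀ A : ℝ, (∑ u' : Fin n, (1/(n:ℝ)) *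
        (surv n s(u,v) t u' * A + (1 - surv n s(u,v) t u') * p))
      = 𝔭 * A + (1 - 𝔭) * p := by
    intro A
    have h1 : 𝔭 = (1/(n:ℝ)) * ∑ l0 : Fin n, surv n s(u,v) t l0 := travProb_eq_surv hn0 t u v
    have expand : ∀ w : Fin n, (1/(n:ℝ)) *
          (surv n s(u,v) t w * A + (1 - surv n s(u,v) t w) * p)
        = (1/(n:ℝ)) * A * surv n s(u,v) t w
          + ((1/(n:ℝ)) * p - (1/(n:ℝ)) * p * surv n s(u,v) t w) := by
      intro w; ring
    rw [Finset.sum_congr rfl fun w _ => expand w]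
    rw [Finset.sum_add_distrib, ← Finset.mul_sum, Finset.sum_sub_distrib,
      Finset.sum_const, ← Finset.mul_sum]
    rw [h1]
    simp only [Finset.card_univ, Fintype.card_fin, nsmul_eq_mul]
    field_simp
  have inner_ind : ∀ (c0 : EConfig n) (u' : Fin n),
      (∑ y : EState n, kPow (elStep n (1-p) p) t (u', c0) y * (if y.2 eP then (1:ℝ) else 0))
        = surv n s(u,v) t u' * (if c0 eP then (1:ℝ) else 0) + (1 - surv n s(u,v) t u') * p :=
    fun c0 u' => phi_eq hn0 p u v huv t (u', c0)
  have inner_one : ∀ (c0 : EConfig n) (u' : Fin n),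
      (∑ y : EState n, kPow (elStep n (1-p) p) t (u', c0) y * (1:ℝ)) = 1 := by
    intro c0 u'
    simp only [mul_one]
    exact kPow_rowsum hn0 (1-p) p t (u', c0)
  -- the four moments
  have J11 : jointExp n p (1-p) p t
      (fun c0 ct => (if c0 eP then (1:ℝ) else 0) * (if ct eP then (1:ℝ) else 0))
      = p * (𝔭 + (1 - 𝔭) * p) := by
    rw [jointExp_eq p t (fun c0 => if c0 eP then (1:ℝ) else 0)
      (fun ct => if ct eP then (1:ℝ) else 0)]
    have step : ∀ c0 : EConfig n, erWeight n p c0 * (if c0 eP then (1:ℝ) else 0) *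
          ((1/(n:ℝ)) * ∑ u' : Fin n, ∑ y : EState n,
            kPow (elStep n (1-p) p) t (u', c0) y * (if y.2 eP then (1:ℝ) else 0))
        = erWeight n p c0 * ((fun b : Bool => (if b then (1:ℝ) else 0) *
            (𝔭 * (if b then (1:ℝ) else 0) + (1 - 𝔭) * p)) (c0 eP)) := by
      intro c0
      rw [Finset.sum_congr rfl fun u' _ => inner_ind c0 u', Finset.mul_sum]
      rw [show (∑ u' : Fin n, (1/(n:ℝ)) *
          (surv n s(u,v) t u' * (if c0 eP then (1:ℝ) else 0)
            + (1 - surv n s(u,v) t u') * p)) = 𝔭 * (if c0 eP then (1:ℝ) else 0) + (1 - 𝔭) * p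
        from hmid _]
      ring
    rw [Finset.sum_congr rfl fun c0 _ => step c0]
    rw [sum_erWeight_mul p eP (fun b : Bool => (if b then (1:ℝ) else 0) *
      (𝔭 * (if b then (1:ℝ) else 0) + (1 - 𝔭) * p))]
    simp
  have J0 : jointExp n p (1-p) p t (fun c0 _ => if c0 eP then (1:ℝ) else 0) = p := by
    have hfe : (fun (c0 ct : EConfig n) => if c0 eP then (1:ℝ) else 0)
        = (fun c0 ct => (if c0 eP then (1:ℝ) else 0) * (fun _ : EConfig n => (1:ℝ)) ct) := by
      funext c0 ct; simp
    rw [hfe, jointExp_eq p t (fun c0 => if c0 eP then (1:ℝ) else 0) (fun _ => (1:ℝ))]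
    have step : ∀ c0 : EConfig n, erWeight n p c0 * (if c0 eP then (1:ℝ) else 0) *
          ((1/(n:ℝ)) * ∑ u' : Fin n, ∑ y : EState n,
            kPow (elStep n (1-p) p) t (u', c0) y * (1:ℝ))
        = erWeight n p c0 * ((fun b : Bool => (if b then (1:ℝ) else 0)) (c0 eP)) := by
      intro c0
      rw [Finset.sum_congr rfl fun u' _ => inner_one c0 u']
      rw [Finset.sum_const, Finset.card_univ, Fintype.card_fin, nsmul_eq_mul, mul_one]
      field_simp
    rw [Finset.sum_congr rfl fun c0 _ => step c0]
    rw [sum_erWeight_mul p eP (fun b : Bool => if b then (1:ℝ) else 0)]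
    simp
  have Jt : jointExp n p (1-p) p t (fun _ ct => if ct eP then (1:ℝ) else 0) = p := by
    have hfe : (fun (c0 ct : EConfig n) => if ct eP then (1:ℝ) else 0)
        = (fun c0 ct => (fun _ : EConfig n => (1:ℝ)) c0 * (if ct eP then (1:ℝ) else 0)) := by
      funext c0 ct; simp
    rw [hfe, jointExp_eq p t (fun _ => (1:ℝ)) (fun ct => if ct eP then (1:ℝ) else 0)]
    have step : ∀ c0 : EConfig n, erWeight n p c0 * (1:ℝ) *
          ((1/(n:ℝ)) * ∑ u' : Fin n, ∑ y : EState n,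
            kPow (elStep n (1-p) p) t (u', c0) y * (if y.2 eP then (1:ℝ) else 0))
        = erWeight n p c0 * ((fun b : Bool =>
            (𝔭 * (if b then (1:ℝ) else 0) + (1 - 𝔭) * p)) (c0 eP)) := by
      intro c0
      rw [Finset.sum_congr rfl fun u' _ => inner_ind c0 u', Finset.mul_sum]
      rw [show (∑ u' : Fin n, (1/(n:ℝ)) *
          (surv n s(u,v) t u' * (if c0 eP then (1:ℝ) else 0)
            + (1 - surv n s(u,v) t u') * p)) = 𝔭 * (if c0 eP then (1:ℝ) else 0) + (1 - 𝔭) * p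
        from hmid _]
      ring
    rw [Finset.sum_congr rfl fun c0 _ => step c0]
    rw [sum_erWeight_mul p eP (fun b : Bool =>
      𝔭 * (if b then (1:ℝ) else 0) + (1 - 𝔭) * p)]
    simp
    ring
  have hsq0 : (fun (c0 ct : EConfig n) => (if c0 eP then (1:ℝ) else 0) ^ 2)
      = (fun (c0 ct : EConfig n) => if c0 eP then (1:ℝ) else 0) := by
    funext c0 ct
    by_cases hb : c0 eP <;> simp [hb]
  have hsqt : (fun (c0 ct : EConfig n) => (if ct eP then (1:ℝ) else 0) ^ 2)
      = (fun (c0 ct : EConfig n) => if ct eP then (1:ℝ) else 0) := by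
    funext c0 ct
    by_cases hb : ct eP <;> simp [hb]
  rw [J11, J0, Jt, hsq0, hsqt, J0, Jt]
  have hvar : p - p ^ 2 = p * (1 - p) := by ring
  have hvpos : (0:ℝ) < p * (1 - p) := by nlinarith
  rw [hvar, Real.mul_self_sqrt hvpos.le]
  rw [show p * (𝔭 + (1 - 𝔭) * p) - p * p = 𝔭 * (p * (1 - p)) by ring]
  rw [mul_div_assoc, div_self hvpos.ne', mul_one]
end

section
/- Let P be a stochastic matrix (the one-step transition matrix of a Markov chain) on a finite state space S and let η be a probability distribution on S. Define d̄(t, η) = max_{y ∈ S} ||η P^t − P^t(y,·)||_TV and d̄(t) = max_{x,y ∈ S} ||P^t(x,·) − P^t(y,·)||_TV, where || · ||_TV is total variation distance. Then for all integers s, t ≥ 0, d̄(s + t, η) ≤ d̄(s, η) · d̄(t). -/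
open scoped BigOperators
open scoped Classical
open Finset

/-- Distribution at time `t` of the chain with kernel `P` started from `η`. -/
noncomputable def fromDist {S : Type*} [Fintype S] (P : S → S → ℝ) (η : S → ℝ)
    (t : ℕ) : S → ℝ :=
  fun z => ∑ x : S, η x * kPow P t x z

/-- `d̄(t, η) = max_y ‖η Pᵗ − Pᵗ(y,·)‖_TV`. -/
noncomputable def dbarFrom {S : Type*} [Fintype S] (P : S → S → ℝ) (η : S → ℝ)
    (t : ℕ) : ℝ :=
  ⨆ y : S, tvDist (fromDist P η t) (kPow P t y)

/-- `d̄(t) = max_{x,y} ‖Pᵗ(x,·) − Pᵗ(y,·)‖_TV`. -/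
noncomputable def dbar {S : Type*} [Fintype S] (P : S → S → ℝ) (t : ℕ) : ℝ :=
  ⨆ pr : S × S, tvDist (kPow P t pr.1) (kPow P t pr.2)


section auxTV
variable {S : Type*} [Fintype S]

lemma kPow_add (P : S → S → ℝ) (s t : ℕ) (x z : S) :
    kPow P (s + t) x z = ∑ w : S, kPow P s x w * kPow P t w z := by
  induction t generalizing z with
  | zero =>
      simp [kPow, Finset.sum_ite_eq, mul_ite]
  | succ t ih =>
      have h : s + (t + 1) = (s + t) + 1 := rfl
      rw [h]
      show (∑ u : S, kPow P (s + t) x u * P u z) = ∑ w : S, kPow P s x w * kPow P (t+1) w z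
      calc ∑ u : S, kPow P (s + t) x u * P u z
          = ∑ u : S, (∑ w : S, kPow P s x w * kPow P t w u) * P u z :=
            Finset.sum_congr rfl fun u _ => by rw [ih]
        _ = ∑ u : S, ∑ w : S, kPow P s x w * (kPow P t w u * P u z) := by
            simp_rw [Finset.sum_mul, mul_assoc]
        _ = ∑ w : S, ∑ u : S, kPow P s x w * (kPow P t w u * P u z) := Finset.sum_comm
        _ = ∑ w : S, kPow P s x w * ∑ u : S, kPow P t w u * P u z := by
            simp_rw [← Finset.mul_sum]
        _ = _ := rfl

lemma kPow_row_sum (P : S → S → ℝ) (hP1 : ∀ x, ∑ y : S, P x y = 1) (t : ℕ) (x : S) :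
    ∑ y : S, kPow P t x y = 1 := by
  induction t with
  | zero => simp [kPow]
  | succ t ih =>
      show (∑ y : S, ∑ z : S, kPow P t x z * P z y) = 1
      rw [Finset.sum_comm]
      simp_rw [← Finset.mul_sum, hP1, mul_one]
      exact ih


lemma tv_core {S : Type*} [Fintype S] (K : S → S → ℝ) (f : S → ℝ)
    (hfsum : ∑ x : S, f x = 0) (D : ℝ) (hD : 0 ≤ D)
    (hK : ∀ x x' : S, (∑ z : S, |K x z - K x' z|) / 2 ≤ D) :
    (∑ z : S, |∑ x : S, f x * K x z|) / 2 ≤ ((∑ x : S, |f x|) / 2) * D := by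
  classical
  set p : S → ℝ := fun x => max (f x) 0 with hp
  set q : S → ℝ := fun x => max (-f x) 0 with hq
  have hp0 : ∀ x, 0 ≤ p x := fun x => le_max_right _ _
  have hq0 : ∀ x, 0 ≤ q x := fun x => le_max_right _ _
  have hpq : ∀ x, f x = p x - q x := by
    intro x; simp only [hp, hq]
    rcases le_total (f x) 0 with h | h
    · rw [max_eq_right h, max_eq_left (by linarith)]; ring
    · rw [max_eq_left h, max_eq_right (by linarith)]; ring
  have habs : ∀ x, |f x| = p x + q x := by
    intro x; simp only [hp, hq]
    rcases le_total (f x) 0 with h | h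
    · rw [abs_of_nonpos h, max_eq_right h, max_eq_left (by linarith)]; ring
    · rw [abs_of_nonneg h, max_eq_left h, max_eq_right (by linarith)]; ring
  set c : ℝ := ∑ x : S, p x with hc
  have hc0 : 0 ≤ c := Finset.sum_nonneg fun x _ => hp0 x
  have hqc : ∑ x : S, q x = c := by
    have : ∑ x : S, (p x - q x) = 0 := by
      calc ∑ x : S, (p x - q x) = ∑ x : S, f x :=
            Finset.sum_congr rfl fun x _ => (hpq x).symm
        _ = 0 := hfsum
    rw [Finset.sum_sub_distrib] at this
    linarith
  have habs_sum : ∑ x : S, |f x| = 2 * c := by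
    rw [Finset.sum_congr rfl (fun x _ => habs x), Finset.sum_add_distrib, hqc]
    ring
  rcases eq_or_lt_of_le hc0 with hczero | hcpos
  · -- c = 0 : f ≡ 0
    have hpz : ∀ x ∈ Finset.univ, p x = 0 :=
      (Finset.sum_eq_zero_iff_of_nonneg (fun x _ => hp0 x)).1 hczero.symm
    have hqz : ∀ x ∈ Finset.univ, q x = 0 := by
      refine (Finset.sum_eq_zero_iff_of_nonneg (fun x _ => hq0 x)).1 ?_
      rw [hqc]; exact hczero.symm
    have hfz : ∀ x, f x = 0 := fun x => by
      rw [hpq x, hpz x (Finset.mem_univ x), hqz x (Finset.mem_univ x)]; ring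
    simp [hfz, habs_sum, ← hczero]
  · -- c > 0
    have key : ∀ z, c * (∑ x : S, f x * K x z)
        = ∑ x : S, ∑ x' : S, p x * q x' * (K x z - K x' z) := by
      intro z
      have hinner : ∀ x, ∑ x' : S, p x * q x' * (K x z - K x' z)
          = p x * K x z * c - p x * (∑ x' : S, q x' * K x' z) := by
        intro x
        calc ∑ x' : S, p x * q x' * (K x z - K x' z)
            = ∑ x' : S, (p x * K x z * q x' - p x * (q x' * K x' z)) :=
              Finset.sum_congr rfl fun x' _ => by ring
          _ = p x * K x z * (∑ x' : S, q x') - p x * (∑ x' : S, q x' * K x' z) := by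
              rw [Finset.sum_sub_distrib, ← Finset.mul_sum, ← Finset.mul_sum]
          _ = _ := by rw [hqc]
      calc c * (∑ x : S, f x * K x z)
          = c * (∑ x : S, (p x - q x) * K x z) := by
            rw [Finset.sum_congr rfl (fun x _ => by rw [hpq x])]
        _ = (∑ x : S, p x * K x z) * c - c * (∑ x : S, q x * K x z) := by
            simp_rw [sub_mul, Finset.sum_sub_distrib]; ring
        _ = ∑ x : S, (p x * K x z * c - p x * (∑ x' : S, q x' * K x' z)) := by
            rw [Finset.sum_sub_distrib, ← Finset.sum_mul, ← Finset.sum_mul, ← hc]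
        _ = ∑ x : S, ∑ x' : S, p x * q x' * (K x z - K x' z) :=
            (Finset.sum_congr rfl fun x _ => (hinner x).symm)
    have main : c * (∑ z : S, |∑ x : S, f x * K x z|) ≤ c * (2 * c * D) := by
      have step1 : c * (∑ z : S, |∑ x : S, f x * K x z|)
          = ∑ z : S, |c * (∑ x : S, f x * K x z)| := by
        rw [Finset.mul_sum]
        exact Finset.sum_congr rfl fun z _ => by
          rw [abs_mul, abs_of_nonneg hc0]
      rw [step1]
      have step2 : ∀ z : S, |c * (∑ x : S, f x * K x z)|
          ≤ ∑ x : S, ∑ x' : S, p x * q x' * |K x z - K x' z| := by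
        intro z
        rw [key z]
        refine le_trans (Finset.abs_sum_le_sum_abs _ _) (Finset.sum_le_sum fun x _ => ?_)
        refine le_trans (Finset.abs_sum_le_sum_abs _ _) (Finset.sum_le_sum fun x' _ => ?_)
        rw [abs_mul, abs_of_nonneg (mul_nonneg (hp0 x) (hq0 x'))]
      refine le_trans (Finset.sum_le_sum fun z _ => step2 z) ?_
      rw [Finset.sum_comm]
      have step3 : ∀ x : S, ∑ z : S, ∑ x' : S, p x * q x' * |K x z - K x' z|
          = ∑ x' : S, p x * q x' * (∑ z : S, |K x z - K x' z|) := by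
        intro x
        rw [Finset.sum_comm]
        exact Finset.sum_congr rfl fun x' _ => by rw [← Finset.mul_sum]
      calc ∑ x : S, ∑ z : S, ∑ x' : S, p x * q x' * |K x z - K x' z|
          = ∑ x : S, ∑ x' : S, p x * q x' * (∑ z : S, |K x z - K x' z|) :=
            Finset.sum_congr rfl fun x _ => step3 x
        _ ≤ ∑ x : S, ∑ x' : S, p x * q x' * (2 * D) := by
            refine Finset.sum_le_sum fun x _ => Finset.sum_le_sum fun x' _ => ?_
            exact mul_le_mul_of_nonneg_left (by have := hK x x'; linarith)
              (mul_nonneg (hp0 x) (hq0 x'))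
        _ = c * (2 * c * D) := by
            have hx : ∀ x : S, ∑ x' : S, p x * q x' * (2 * D) = p x * ((2 * D) * c) := by
              intro x
              calc ∑ x' : S, p x * q x' * (2 * D)
                  = ∑ x' : S, p x * (2 * D) * q x' :=
                    Finset.sum_congr rfl fun x' _ => by ring
                _ = p x * (2 * D) * ∑ x' : S, q x' := by rw [← Finset.mul_sum]
                _ = p x * ((2 * D) * c) := by rw [hqc]; ring
            calc ∑ x : S, ∑ x' : S, p x * q x' * (2 * D)
                = ∑ x : S, p x * ((2 * D) * c) :=
                  Finset.sum_congr rfl fun x _ => hx x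
              _ = (∑ x : S, p x) * ((2 * D) * c) := by rw [← Finset.sum_mul]
              _ = c * (2 * c * D) := by rw [← hc]; ring
    have := le_of_mul_le_mul_left main hcpos
    rw [habs_sum]
    linarith


end auxTV

/-- For a stochastic matrix `P` on a finite state space and a probability
distribution `η`, the quantity `d̄(t, η)` is submultiplicative:
`d̄(s + t, η) ≤ d̄(s, η) · d̄(t)`. -/
theorem dbar_submultiplicative {S : Type*} [Fintype S] [Nonempty S]
    (P : S → S → ℝ) (hP0 : ∀ x y, 0 ≤ P x y) (hP1 : ∀ x, ∑ y : S, P x y = 1)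
    (η : S → ℝ) (hη0 : ∀ x, 0 ≤ η x) (hη1 : ∑ x : S, η x = 1) (s t : ℕ) :
    dbarFrom P η (s + t) ≤ dbarFrom P η s * dbar P t := by
  classical
  have hbdd : BddAbove (Set.range fun pr : S × S => tvDist (kPow P t pr.1) (kPow P t pr.2)) :=
    Set.Finite.bddAbove (Set.finite_range _)
  have hbddF : ∀ u : ℕ, BddAbove (Set.range fun y : S => tvDist (fromDist P η u) (kPow P u y)) :=
    fun u => Set.Finite.bddAbove (Set.finite_range _)
  have hdnn : 0 ≤ dbar P t := by
    obtain ⟨y⟩ := ‹Nonempty S›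
    refine le_trans ?_ (le_ciSup hbdd (y, y))
    unfold tvDist
    positivity
  refine ciSup_le fun y => ?_
  set f : S → ℝ := fun x => fromDist P η s x - kPow P s y x with hf
  have hrowF : ∑ x : S, fromDist P η s x = 1 := by
    unfold fromDist
    rw [Finset.sum_comm]
    simp_rw [← Finset.mul_sum, kPow_row_sum P hP1 s, mul_one]
    exact hη1
  have hfsum : ∑ x : S, f x = 0 := by
    simp only [hf]
    rw [Finset.sum_sub_distrib, hrowF, kPow_row_sum P hP1 s y]
    ring
  have hdecomp : ∀ z : S, fromDist P η (s + t) z - kPow P (s + t) y z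
      = ∑ x : S, f x * kPow P t x z := by
    intro z
    have h1 : fromDist P η (s + t) z = ∑ x : S, fromDist P η s x * kPow P t x z := by
      unfold fromDist
      calc ∑ w : S, η w * kPow P (s + t) w z
          = ∑ w : S, ∑ x : S, η w * (kPow P s w x * kPow P t x z) := by
            refine Finset.sum_congr rfl fun w _ => ?_
            rw [kPow_add, Finset.mul_sum]
        _ = ∑ x : S, ∑ w : S, η w * (kPow P s w x * kPow P t x z) := Finset.sum_comm
        _ = ∑ x : S, (∑ w : S, η w * kPow P s w x) * kPow P t x z := by
            refine Finset.sum_congr rfl fun x _ => ?_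
            rw [Finset.sum_mul]
            exact Finset.sum_congr rfl fun w _ => by ring
    rw [h1, kPow_add P s t y z, ← Finset.sum_sub_distrib]
    exact Finset.sum_congr rfl fun x _ => by simp only [hf]; ring
  have hK : ∀ x x' : S, (∑ z : S, |kPow P t x z - kPow P t x' z|) / 2 ≤ dbar P t :=
    fun x x' => le_ciSup hbdd (x, x')
  have hcore := tv_core (kPow P t) f hfsum (dbar P t) hdnn hK
  show tvDist (fromDist P η (s + t)) (kPow P (s + t) y) ≤ _
  unfold tvDist
  calc (∑ z : S, |fromDist P η (s + t) z - kPow P (s + t) y z|) / 2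
      = (∑ z : S, |∑ x : S, f x * kPow P t x z|) / 2 := by
        rw [Finset.sum_congr rfl fun z _ => by rw [hdecomp z]]
    _ ≤ ((∑ x : S, |f x|) / 2) * dbar P t := hcore
    _ ≤ dbarFrom P η s * dbar P t := by
        refine mul_le_mul_of_nonneg_right ?_ hdnn
        exact le_ciSup (hbddF s) y
end
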